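/- arXiv:1808.00431 — 4 statements merged into one kernel-verified Lean document; each statement's English description precedes it below -/
import Mathlib

section
/- Euler's pentagonal number theorem: the infinite product ∏_{n≥1} (1 - X^n) equals the sum ∑_{n=-∞}^{∞} (-1)^n X^{(3n²+n)/2} as formal power series. -/
open Finset

namespace Pent

lemma exists_run (S : Finset ℕ) (h : S.Nonempty) : ∃ x, Finset.Icc x (S.max' h) ⊆ S := by
  refine ⟨S.max' h, ?_⟩
  intro x hx
  simp only [mem_Icc] at hx
  have hx' : x = S.max' h := le_antisymm hx.2 hx.1
  subst hx'; exact S.max'_mem h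

def uu (S : Finset ℕ) (h : S.Nonempty) : ℕ := Nat.find (exists_run S h)

lemma uu_subset (S : Finset ℕ) (h : S.Nonempty) : Icc (uu S h) (S.max' h) ⊆ S :=
  Nat.find_spec (exists_run S h)

lemma uu_le_of (S : Finset ℕ) (h : S.Nonempty) (u : ℕ) (h1 : Icc u (S.max' h) ⊆ S) :
    uu S h ≤ u := Nat.find_le h1

lemma uu_le (S : Finset ℕ) (h : S.Nonempty) : uu S h ≤ S.max' h := by
  apply uu_le_of
  intro x hx
  simp only [mem_Icc] at hx
  have hx' : x = S.max' h := le_antisymm hx.2 hx.1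
  subst hx'; exact S.max'_mem h

lemma uu_mem (S : Finset ℕ) (h : S.Nonempty) : uu S h ∈ S :=
  uu_subset S h (by simp [mem_Icc, uu_le S h])

lemma uu_pos (S : Finset ℕ) (h : S.Nonempty) (h0 : 0 ∉ S) : 1 ≤ uu S h := by
  by_contra hc
  push_neg at hc
  interval_cases hu : uu S h
  · exact h0 (by simpa using hu ▸ uu_mem S h)

lemma uu_pred_not_mem (S : Finset ℕ) (h : S.Nonempty) (h0 : 0 ∉ S) : uu S h - 1 ∉ S := by
  intro hmem
  have h1 : 1 ≤ uu S h := uu_pos S h h0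
  have := Nat.find_min (exists_run S h) (show uu S h - 1 < uu S h by omega)
  apply this
  intro x hx
  simp only [mem_Icc] at hx
  rcases eq_or_ne x (uu S h - 1) with rfl | hne
  · exact hmem
  · exact uu_subset S h (by simp only [mem_Icc]; omega)

lemma uu_eq (S : Finset ℕ) (h : S.Nonempty) (u : ℕ) (h3 : 1 ≤ u) (h0 : u ≤ S.max' h)
    (h1 : Icc u (S.max' h) ⊆ S) (h2 : u - 1 ∉ S) : uu S h = u := by
  refine le_antisymm (Nat.find_le h1) ?_
  by_contra hc
  push_neg at hc
  have hsub := uu_subset S h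
  exact h2 (hsub (by simp only [mem_Icc]; omega))

lemma min'_le_uu (S : Finset ℕ) (h : S.Nonempty) : S.min' h ≤ uu S h :=
  S.min'_le _ (uu_mem S h)

lemma max'_eq (S : Finset ℕ) (h : S.Nonempty) (b : ℕ) (hb : b ∈ S) (hall : ∀ x ∈ S, x ≤ b) :
    S.max' h = b :=
  le_antisymm (S.max'_le h b hall) (S.le_max' b hb)

lemma min'_eq (S : Finset ℕ) (h : S.Nonempty) (a : ℕ) (ha : a ∈ S) (hall : ∀ x ∈ S, a ≤ x) :
    S.min' h = a :=
  le_antisymm (S.min'_le a ha) (le_min' S h a hall)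

lemma Icc_nonempty' {a b : ℕ} (hab : a ≤ b) : (Icc a b).Nonempty := by
  rw [Finset.nonempty_Icc]; exact hab

lemma Icc_max' {a b : ℕ} (hab : a ≤ b) : (Icc a b).max' (Icc_nonempty' hab) = b :=
  max'_eq _ _ b (by simp [hab]) (fun x hx => by simp only [mem_Icc] at hx; exact hx.2)

lemma Icc_min' {a b : ℕ} (hab : a ≤ b) : (Icc a b).min' (Icc_nonempty' hab) = a :=
  min'_eq _ _ a (by simp [hab]) (fun x hx => by simp only [mem_Icc] at hx; exact hx.1)

lemma Icc_uu {a b : ℕ} (ha : 1 ≤ a) (hab : a ≤ b) : uu (Icc a b) (Icc_nonempty' hab) = a := by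
  apply uu_eq
  · exact ha
  · rw [Icc_max' hab]; exact hab
  · rw [Icc_max' hab]
  · simp only [mem_Icc]; omega

/-- Franklin's involution. -/
def phi (S : Finset ℕ) : Finset ℕ :=
  if h : S.Nonempty then
    if uu S h + S.min' h ≤ S.max' h + 1 then
      insert (S.max' h + 1) ((S.erase (S.min' h)).erase (S.max' h - S.min' h + 1))
    else
      insert (S.max' h + 1 - uu S h) (insert (uu S h - 1) (S.erase (S.max' h)))
  else ∅

lemma stepA {S : Finset ℕ} (h : S.Nonempty) (h0 : 0 ∉ S)
    (hA : uu S h + S.min' h ≤ S.max' h + 1) (hx : 2 * S.min' h ≤ S.max' h) :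
    ∃ h' : (phi S).Nonempty, 0 ∉ phi S ∧
      (phi S).max' h' + 2 ≤ uu (phi S) h' + (phi S).min' h' ∧
      2 * uu (phi S) h' ≠ (phi S).max' h' + 2 ∧
      phi (phi S) = S ∧ (phi S).card + 1 = S.card ∧
      (∑ i ∈ phi S, i) = ∑ i ∈ S, i ∧ (∀ x ∈ phi S, x ≤ ∑ i ∈ S, i) := by
  set m := S.max' h with hm
  set s := S.min' h with hs
  set u := uu S h with hu
  have hsS : s ∈ S := S.min'_mem h
  have hmS : m ∈ S := S.max'_mem h
  have hs1 : 1 ≤ s := by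
    rcases Nat.eq_zero_or_pos s with h' | h'
    · exact absurd (h' ▸ hsS) h0
    · exact h'
  have hsu : s ≤ u := min'_le_uu S h
  have hum : u ≤ m := uu_le S h
  have hsm : s < m := by omega
  have hmem_key : m - s + 1 ∈ S := uu_subset S h (by simp only [mem_Icc]; omega)
  have hm1 : m + 1 ∉ S := fun hc => by have := S.le_max' _ hc; omega
  set E := (S.erase s).erase (m - s + 1) with hE
  set T := insert (m + 1) E with hT
  have hmemT : ∀ x, x ∈ T ↔ x = m + 1 ∨ (x ∈ S ∧ x ≠ s ∧ x ≠ m - s + 1) := by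
    intro x
    simp only [hT, hE, mem_insert, mem_erase]
    tauto
  have hphi : phi S = T := by rw [phi, dif_pos h, if_pos hA]
  have hbound : ∀ x ∈ S, x ≤ m := fun x hx => S.le_max' x hx
  have hsbound : ∀ x ∈ S, s ≤ x := fun x hx => S.min'_le x hx
  rw [hphi]
  have hTne : T.Nonempty := insert_nonempty _ _
  have hT0 : 0 ∉ T := by
    intro hc
    rw [hmemT] at hc
    rcases hc with hc | hc
    · omega
    · exact h0 hc.1
  have hmaxT : T.max' hTne = m + 1 := by
    apply max'_eq
    · rw [hmemT]; left; rfl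
    · intro x hx
      rw [hmemT] at hx
      rcases hx with rfl | hx
      · exact le_rfl
      · have := hbound x hx.1; omega
  have hminT : s + 1 ≤ T.min' hTne := by
    apply le_min'
    intro x hx
    rw [hmemT] at hx
    rcases hx with rfl | hx
    · omega
    · have h1 := hsbound x hx.1
      have h2 := hx.2.1
      omega
  have huT : uu T hTne = m - s + 2 := by
    apply uu_eq
    · omega
    · rw [hmaxT]; omega
    · rw [hmaxT]
      intro x hx
      simp only [mem_Icc] at hx
      rw [hmemT]
      rcases eq_or_ne x (m + 1) with rfl | hne
      · left; rfl
      · right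
        refine ⟨uu_subset S h ?_, by omega, by omega⟩
        simp only [mem_Icc]; omega
    · intro hc
      rw [hmemT] at hc
      rcases hc with hc | hc
      · omega
      · exact hc.2.2 (by omega)
  have h2E : m + 1 ∉ E := by
    intro hc
    simp only [hE, mem_erase] at hc
    exact hm1 hc.2.2
  have h1E : m - s + 1 ∈ S.erase s := mem_erase.2 ⟨by omega, hmem_key⟩
  have hsum : ∑ i ∈ T, i = ∑ i ∈ S, i := by
    rw [hT, sum_insert h2E]
    have e1 : (m - s + 1) + ∑ i ∈ E, i = ∑ i ∈ S.erase s, i := by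
      rw [hE]; exact Finset.add_sum_erase _ (fun i => i) h1E
    have e2 : s + ∑ i ∈ S.erase s, i = ∑ i ∈ S, i := Finset.add_sum_erase _ (fun i => i) hsS
    omega
  have hcard : T.card + 1 = S.card := by
    have hc2 : 2 ≤ S.card := by
      have hsub : ({s, m} : Finset ℕ) ⊆ S := by
        intro y hy
        simp only [mem_insert, mem_singleton] at hy
        rcases hy with rfl | rfl <;> assumption
      calc 2 = ({s, m} : Finset ℕ).card := (card_pair (by omega)).symm
        _ ≤ S.card := card_le_card hsub
    have hcE : S.card = E.card + 2 := by
      rw [hE, card_erase_of_mem h1E, card_erase_of_mem hsS]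
      omega
    rw [hT, card_insert_of_notMem h2E]
    omega
  have hle : ∀ x ∈ T, x ≤ ∑ i ∈ S, i := by
    have hmsum : s + m ≤ ∑ i ∈ S, i := by
      have hsub : ({s, m} : Finset ℕ) ⊆ S := by
        intro y hy
        simp only [mem_insert, mem_singleton] at hy
        rcases hy with rfl | rfl <;> assumption
      have hp : ∑ i ∈ ({s, m} : Finset ℕ), i = s + m := Finset.sum_pair (show s ≠ m by omega)
      calc s + m = ∑ i ∈ ({s, m} : Finset ℕ), i := hp.symm
        _ ≤ ∑ i ∈ S, i := sum_le_sum_of_subset hsub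
    intro x hx
    rw [hmemT] at hx
    rcases hx with rfl | hx
    · omega
    · have := hbound x hx.1; omega
  have hcondB1 : T.max' hTne + 2 ≤ uu T hTne + T.min' hTne := by rw [hmaxT, huT]; omega
  have hcondB2 : 2 * uu T hTne ≠ T.max' hTne + 2 := by rw [hmaxT, huT]; omega
  have hphiT : phi T = S := by
    rw [phi, dif_pos hTne, if_neg (by omega)]
    rw [hmaxT, huT]
    have e1 : T.erase (m + 1) = E := by rw [hT, erase_insert h2E]
    rw [e1]
    have e2 : m + 1 + 1 - (m - s + 2) = s := by omega
    have e3 : m - s + 2 - 1 = m - s + 1 := by omega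
    rw [e2, e3]
    ext x
    simp only [mem_insert, hE, mem_erase]
    constructor
    · rintro (rfl | rfl | hx)
      · exact hsS
      · exact hmem_key
      · exact hx.2.2
    · intro hxS
      rcases eq_or_ne x s with rfl | h1
      · left; rfl
      rcases eq_or_ne x (m - s + 1) with rfl | h2
      · right; left; rfl
      · right; right; exact ⟨h2, h1, hxS⟩
  exact ⟨hTne, hT0, hcondB1, hcondB2, hphiT, hcard, hsum, hle⟩

lemma stepB {S : Finset ℕ} (h : S.Nonempty) (h0 : 0 ∉ S)
    (hB : S.max' h + 2 ≤ uu S h + S.min' h) (hy : 2 * uu S h ≠ S.max' h + 2) :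
    ∃ h' : (phi S).Nonempty, 0 ∉ phi S ∧
      uu (phi S) h' + (phi S).min' h' ≤ (phi S).max' h' + 1 ∧
      2 * (phi S).min' h' ≤ (phi S).max' h' ∧
      phi (phi S) = S ∧ (phi S).card = S.card + 1 ∧
      (∑ i ∈ phi S, i) = ∑ i ∈ S, i ∧ (∀ x ∈ phi S, x ≤ ∑ i ∈ S, i) := by
  set m := S.max' h with hm
  set s := S.min' h with hs
  set u := uu S h with hu
  have hsS : s ∈ S := S.min'_mem h
  have hmS : m ∈ S := S.max'_mem h
  have hs1 : 1 ≤ s := by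
    rcases Nat.eq_zero_or_pos s with h' | h'
    · exact absurd (h' ▸ hsS) h0
    · exact h'
  have hsu : s ≤ u := min'_le_uu S h
  have hum : u ≤ m := uu_le S h
  have h2u : m + 3 ≤ 2 * u := by omega
  have hupred : u - 1 ∉ S := uu_pred_not_mem S h h0
  have hsbound : ∀ x ∈ S, s ≤ x := fun x hx => S.min'_le x hx
  have hbound : ∀ x ∈ S, x ≤ m := fun x hx => S.le_max' x hx
  have hrnot : m + 1 - u ∉ S := by
    intro hc
    have := hsbound _ hc
    omega
  set E := S.erase m with hE
  set T := insert (m + 1 - u) (insert (u - 1) E) with hT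
  have hmemT : ∀ x, x ∈ T ↔ x = m + 1 - u ∨ x = u - 1 ∨ (x ∈ S ∧ x ≠ m) := by
    intro x
    simp only [hT, hE, mem_insert, mem_erase]
    tauto
  have hphi : phi S = T := by rw [phi, dif_pos h, if_neg (by omega)]
  rw [hphi]
  have hTne : T.Nonempty := insert_nonempty _ _
  have hT0 : 0 ∉ T := by
    intro hc
    rw [hmemT] at hc
    rcases hc with hc | hc | hc
    · omega
    · omega
    · exact h0 hc.1
  have hmaxT : T.max' hTne = m - 1 := by
    apply max'_eq
    · rw [hmemT]
      by_cases hc : u = m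
      · right; left; omega
      · right; right
        exact ⟨uu_subset S h (by simp only [mem_Icc]; omega), by omega⟩
    · intro x hx
      rw [hmemT] at hx
      rcases hx with rfl | rfl | hx
      · omega
      · omega
      · have := hbound x hx.1
        have := hx.2
        omega
  have hminT : T.min' hTne = m + 1 - u := by
    apply min'_eq
    · rw [hmemT]; left; rfl
    · intro x hx
      rw [hmemT] at hx
      rcases hx with rfl | rfl | hx
      · omega
      · omega
      · have := hsbound x hx.1
        omega
  have huT_le : uu T hTne ≤ u - 1 := by
    apply uu_le_of
    rw [hmaxT]
    intro x hx
    simp only [mem_Icc] at hx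
    rw [hmemT]
    rcases eq_or_ne x (u - 1) with rfl | hne
    · right; left; rfl
    · right; right
      exact ⟨uu_subset S h (by simp only [mem_Icc]; omega), by omega⟩
  have hcondA1 : uu T hTne + T.min' hTne ≤ T.max' hTne + 1 := by
    rw [hmaxT, hminT]
    omega
  have hcondA2 : 2 * T.min' hTne ≤ T.max' hTne := by
    rw [hmaxT, hminT]
    omega
  have hu1E : u - 1 ∉ E := by
    intro hc
    rw [hE, mem_erase] at hc
    exact hupred hc.2
  have hrE : m + 1 - u ∉ insert (u - 1) E := by
    intro hc
    rcases mem_insert.1 hc with hc | hc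
    · omega
    · rw [hE, mem_erase] at hc
      exact hrnot hc.2
  have hsum : ∑ i ∈ T, i = ∑ i ∈ S, i := by
    rw [hT, sum_insert hrE, sum_insert hu1E]
    have e2 : m + ∑ i ∈ E, i = ∑ i ∈ S, i := by
      rw [hE]; exact Finset.add_sum_erase _ (fun i => i) hmS
    omega
  have hcard : T.card = S.card + 1 := by
    have h1 : 1 ≤ S.card := Finset.card_pos.2 h
    rw [hT, card_insert_of_notMem hrE, card_insert_of_notMem hu1E, hE,
      card_erase_of_mem hmS]
    omega
  have hle : ∀ x ∈ T, x ≤ ∑ i ∈ S, i := by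
    have hm_le : m ≤ ∑ i ∈ S, i := Finset.single_le_sum (f := fun i => i) (fun i _ => Nat.zero_le i) hmS
    intro x hx
    rw [hmemT] at hx
    rcases hx with rfl | rfl | hx
    · omega
    · omega
    · have := hbound x hx.1
      omega
  have hphiT : phi T = S := by
    rw [phi, dif_pos hTne, if_pos hcondA1, hmaxT, hminT]
    have e1 : T.erase (m + 1 - u) = insert (u - 1) E := by rw [hT, erase_insert hrE]
    have e3 : m - 1 - (m + 1 - u) + 1 = u - 1 := by omega
    rw [e1, e3, erase_insert hu1E]
    have e4 : m - 1 + 1 = m := by omega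
    rw [e4, hE, insert_erase hmS]
  exact ⟨hTne, hT0, hcondA1, hcondA2, hphiT, hcard, hsum, hle⟩

lemma Icc_max'' {a b : ℕ} (hab : a ≤ b) (h : (Icc a b).Nonempty) : (Icc a b).max' h = b :=
  Icc_max' hab

lemma Icc_min'' {a b : ℕ} (hab : a ≤ b) (h : (Icc a b).Nonempty) : (Icc a b).min' h = a :=
  Icc_min' hab

lemma Icc_uu' {a b : ℕ} (ha : 1 ≤ a) (hab : a ≤ b) (h : (Icc a b).Nonempty) :
    uu (Icc a b) h = a := Icc_uu ha hab

/-- Exceptional ("pentagonal") sets. -/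
def P (N : ℕ) (S : Finset ℕ) : Prop :=
  S = ∅ ∨ ∃ k ∈ Icc 1 N, S = Icc k (2 * k - 1) ∨ S = Icc (k + 1) (2 * k)

instance (N : ℕ) : DecidablePred (P N) := fun S => by
  unfold P; infer_instance

lemma notP_of_condA {N : ℕ} {S : Finset ℕ} (h : S.Nonempty)
    (hA : uu S h + S.min' h ≤ S.max' h + 1) (hx : 2 * S.min' h ≤ S.max' h) : ¬ P N S := by
  rintro (rfl | ⟨k, hk, rfl | rfl⟩)
  · exact not_nonempty_empty h
  · simp only [mem_Icc] at hk
    rw [Icc_min'' (by omega) h, Icc_max'' (by omega) h] at hx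
    omega
  · simp only [mem_Icc] at hk
    rw [Icc_min'' (by omega) h, Icc_max'' (by omega) h, Icc_uu' (by omega) (by omega) h] at hA
    omega

lemma notP_of_condB {N : ℕ} {S : Finset ℕ} (h : S.Nonempty)
    (hB : S.max' h + 2 ≤ uu S h + S.min' h) (hy : 2 * uu S h ≠ S.max' h + 2) : ¬ P N S := by
  rintro (rfl | ⟨k, hk, rfl | rfl⟩)
  · exact not_nonempty_empty h
  · simp only [mem_Icc] at hk
    rw [Icc_min'' (by omega) h, Icc_max'' (by omega) h, Icc_uu' (by omega) (by omega) h] at hB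
    omega
  · simp only [mem_Icc] at hk
    rw [Icc_max'' (by omega) h, Icc_uu' (by omega) (by omega) h] at hy
    omega

lemma cond_of_notP {N : ℕ} {S : Finset ℕ} (hsub : S ⊆ Icc 1 N) (hnP : ¬ P N S) :
    ∃ h : S.Nonempty, 0 ∉ S ∧
      ((uu S h + S.min' h ≤ S.max' h + 1 ∧ 2 * S.min' h ≤ S.max' h) ∨
        (S.max' h + 2 ≤ uu S h + S.min' h ∧ 2 * uu S h ≠ S.max' h + 2)) := by
  have hne : S ≠ ∅ := fun hc => hnP (Or.inl hc)
  have h : S.Nonempty := nonempty_iff_ne_empty.2 hne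
  have h0 : 0 ∉ S := fun hc => by simpa using (mem_Icc.1 (hsub hc)).1
  refine ⟨h, h0, ?_⟩
  set m := S.max' h with hm
  set s := S.min' h with hs
  set u := uu S h with hu
  have hsS : s ∈ S := S.min'_mem h
  have hmS : m ∈ S := S.max'_mem h
  have hs1 : 1 ≤ s := by
    rcases Nat.eq_zero_or_pos s with h' | h'
    · exact absurd (h' ▸ hsS) h0
    · exact h'
  have hsu : s ≤ u := min'_le_uu S h
  have hum : u ≤ m := uu_le S h
  have hmN : m ≤ N := (mem_Icc.1 (hsub hmS)).2
  by_cases hc : u + s ≤ m + 1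
  · left
    refine ⟨hc, ?_⟩
    by_contra hx
    push_neg at hx
    have hsm : 2 * s = m + 1 := by omega
    have hus : u = s := by omega
    have hSeq : S = Icc s m := by
      ext x
      simp only [mem_Icc]
      constructor
      · intro hxS
        exact ⟨S.min'_le x hxS, S.le_max' x hxS⟩
      · intro hx2
        exact uu_subset S h (by simp only [mem_Icc]; omega)
    apply hnP
    right
    refine ⟨s, mem_Icc.2 ⟨hs1, le_trans (S.min'_le s hsS |>.trans (le_refl s)) (by
      have := (mem_Icc.1 (hsub hsS)).2; omega)⟩, Or.inl ?_⟩
    rw [hSeq]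
    congr 1
    omega
  · right
    rw [not_le] at hc
    refine ⟨by omega, ?_⟩
    by_contra hy

    have hus : u = s := by omega
    have hSeq : S = Icc s m := by
      ext x
      simp only [mem_Icc]
      constructor
      · intro hxS
        exact ⟨S.min'_le x hxS, S.le_max' x hxS⟩
      · intro hx2
        exact uu_subset S h (by simp only [mem_Icc]; omega)
    apply hnP
    right
    refine ⟨u - 1, mem_Icc.2 ⟨by omega, by omega⟩, Or.inr ?_⟩
    rw [hSeq]
    congr 1
    · omega
    · omega

lemma sum_Icc_aux (a d : ℕ) : (∑ i ∈ Icc a (a + d), i) * 2 = (2 * a + d) * (d + 1) := by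
  induction d with
  | zero => simp [Finset.Icc_self]; ring
  | succ d ih =>
    have h1 : a + (d + 1) = (a + d) + 1 := by omega
    rw [h1, Finset.sum_Icc_succ_top (by omega)]
    calc ((∑ i ∈ Icc a (a + d), i) + (a + d + 1)) * 2
        = (∑ i ∈ Icc a (a + d), i) * 2 + (a + d + 1) * 2 := by ring
      _ = (2 * a + d) * (d + 1) + (a + d + 1) * 2 := by rw [ih]
      _ = (2 * a + (d + 1)) * (d + 1 + 1) := by ring

lemma sum_Icc_mul_two (a b : ℕ) (hab : a ≤ b) :
    (∑ i ∈ Icc a b, i) * 2 = (a + b) * (b + 1 - a) := by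
  obtain ⟨d, rfl⟩ : ∃ d, b = a + d := ⟨b - a, by omega⟩
  rw [sum_Icc_aux]
  have e1 : a + (a + d) = 2 * a + d := by omega
  have e2 : a + d + 1 - a = d + 1 := by omega
  rw [e1, e2]

lemma sum_pent_pos (k : ℕ) (hk : 1 ≤ k) :
    (∑ i ∈ Icc (k + 1) (2 * k), i) * 2 = 3 * k ^ 2 + k := by
  rw [sum_Icc_mul_two _ _ (by omega)]
  rw [show k + 1 + 2 * k = 3 * k + 1 by omega, show 2 * k + 1 - (k + 1) = k by omega]
  ring

lemma sum_pent_neg (k : ℕ) (hk : 1 ≤ k) :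
    (∑ i ∈ Icc k (2 * k - 1), i) * 2 + k = 3 * k ^ 2 := by
  rw [sum_Icc_mul_two _ _ (by omega)]
  obtain ⟨j, rfl⟩ : ∃ j, k = j + 1 := ⟨k - 1, by omega⟩
  rw [show j + 1 + (2 * (j + 1) - 1) = 3 * j + 2 by omega,
    show 2 * (j + 1) - 1 + 1 - (j + 1) = j + 1 by omega]
  ring

lemma sup_Icc (a b : ℕ) (hab : a ≤ b) : (Icc a b).sup id = b :=
  le_antisymm (Finset.sup_le fun x hx => (mem_Icc.1 hx).2)
    (Finset.le_sup (f := id) (mem_Icc.2 ⟨hab, le_rfl⟩))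

lemma neg_one_pow_add_eq_zero {a b : ℕ} (hab : a + 1 = b ∨ b + 1 = a) :
    (-1 : ℤ) ^ a + (-1 : ℤ) ^ b = 0 := by
  rcases hab with rfl | rfl
  · rw [pow_succ]; ring
  · rw [pow_succ]; ring

/-- The collection of sets of distinct parts in `[1, N]` summing to `N`. -/
def TT (N : ℕ) : Finset (Finset ℕ) :=
  (Icc 1 N).powerset.filter (fun t => ∑ i ∈ t, i = N)

lemma key (N : ℕ) (S : Finset ℕ) (ha : S ∈ (TT N).filter (fun S => ¬ P N S)) :
    phi S ∈ (TT N).filter (fun S => ¬ P N S) ∧ phi (phi S) = S ∧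
      ((phi S).card + 1 = S.card ∨ S.card + 1 = (phi S).card) := by
  rw [mem_filter, TT, mem_filter, mem_powerset] at ha
  obtain ⟨⟨hsub, hsum⟩, hnP⟩ := ha
  obtain ⟨h, h0, hcase⟩ := cond_of_notP hsub hnP
  rcases hcase with ⟨hA1, hA2⟩ | ⟨hB1, hB2⟩
  · obtain ⟨h', h0', hc1, hc2, hinv, hcard, hsums, hle⟩ := stepA h h0 hA1 hA2
    refine ⟨?_, hinv, Or.inl hcard⟩
    rw [mem_filter, TT, mem_filter, mem_powerset]
    refine ⟨⟨?_, hsums.trans hsum⟩, notP_of_condB h' hc1 hc2⟩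
    intro x hx
    rw [mem_Icc]
    have hx1 : x ≠ 0 := fun hc => h0' (hc ▸ hx)
    have hx2 := hle x hx
    omega
  · obtain ⟨h', h0', hc1, hc2, hinv, hcard, hsums, hle⟩ := stepB h h0 hB1 hB2
    refine ⟨?_, hinv, Or.inr hcard.symm⟩
    rw [mem_filter, TT, mem_filter, mem_powerset]
    refine ⟨⟨?_, hsums.trans hsum⟩, notP_of_condA h' hc1 hc2⟩
    intro x hx
    rw [mem_Icc]
    have hx1 : x ≠ 0 := fun hc => h0' (hc ▸ hx)
    have hx2 := hle x hx
    omega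

lemma sum_TT (N : ℕ) :
    ∑ S ∈ TT N, (-1 : ℤ) ^ S.card = ∑ S ∈ (TT N).filter (P N), (-1 : ℤ) ^ S.card := by
  rw [← Finset.sum_filter_add_sum_filter_not (TT N) (P N) (fun S => (-1 : ℤ) ^ S.card)]
  have hzero : ∑ S ∈ (TT N).filter (fun S => ¬ P N S), (-1 : ℤ) ^ S.card = 0 := by
    refine Finset.sum_involution (fun S _ => phi S) ?_ ?_ (fun S ha => (key N S ha).1)
      (fun S ha => (key N S ha).2.1)
    · intro S ha
      show (-1 : ℤ) ^ S.card + (-1 : ℤ) ^ (phi S).card = 0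
      exact neg_one_pow_add_eq_zero (by have := (key N S ha).2.2; omega)
    · intro S ha _
      intro hc
      have hc' : phi S = S := hc
      have := (key N S ha).2.2
      rw [hc'] at this
      omega
  rw [hzero, add_zero]

def toZ (S : Finset ℕ) : ℤ :=
  if S.sup id % 2 = 0 then ((S.sup id / 2 : ℕ) : ℤ) else -(((S.sup id + 1) / 2 : ℕ) : ℤ)

def toSet (m : ℤ) : Finset ℕ :=
  if 0 ≤ m then Icc (m.toNat + 1) (2 * m.toNat) else Icc (-m).toNat (2 * (-m).toNat - 1)

lemma toZ_empty : toZ ∅ = 0 := by simp [toZ]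

lemma toZ_neg (k : ℕ) (hk : 1 ≤ k) : toZ (Icc k (2 * k - 1)) = -(k : ℤ) := by
  have hsup : (Icc k (2 * k - 1)).sup id = 2 * k - 1 := sup_Icc _ _ (by omega)
  rw [toZ, hsup, if_neg (by omega)]
  have e : (2 * k - 1 + 1) / 2 = k := by omega
  rw [e]

lemma toZ_pos (k : ℕ) (hk : 1 ≤ k) : toZ (Icc (k + 1) (2 * k)) = (k : ℤ) := by
  have hsup : (Icc (k + 1) (2 * k)).sup id = 2 * k := sup_Icc _ _ (by omega)
  rw [toZ, hsup, if_pos (by omega)]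
  have e : 2 * k / 2 = k := by omega
  rw [e]

lemma toSet_pos (k : ℕ) : toSet ((k : ℕ) : ℤ) = Icc (k + 1) (2 * k) := by
  rw [toSet, if_pos (by positivity)]
  simp

lemma toSet_neg (k : ℕ) (hk : 1 ≤ k) : toSet (-((k : ℕ) : ℤ)) = Icc k (2 * k - 1) := by
  have h1 : (1 : ℤ) ≤ (k : ℤ) := by exact_mod_cast hk
  rw [toSet, if_neg (by omega)]
  simp

lemma even_pent (m : ℤ) : 2 ∣ 3 * m ^ 2 + m := by
  obtain ⟨c, hc⟩ := Int.even_mul_succ_self m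
  have h : m * (m + 1) = m ^ 2 + m := by ring
  exact ⟨m ^ 2 + c, by omega⟩

lemma memZ_cases {N : ℕ} {m : ℤ}
    (hm : m ∈ (Finset.Icc (-(N : ℤ)) (N : ℤ)).filter (fun m => (3 * m ^ 2 + m) / 2 = (N : ℤ))) :
    3 * m ^ 2 + m = 2 * N ∧ -(N : ℤ) ≤ m ∧ m ≤ N := by
  rw [mem_filter, mem_Icc] at hm
  obtain ⟨⟨h1, h2⟩, h3⟩ := hm
  obtain ⟨c, hc⟩ := even_pent m
  exact ⟨by omega, h1, h2⟩

lemma memP_cases {N : ℕ} {S : Finset ℕ} (hS : S ∈ (TT N).filter (P N)) :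
    (S = ∅ ∧ N = 0) ∨
      (∃ k : ℕ, 1 ≤ k ∧ k ≤ N ∧ S = Icc k (2 * k - 1) ∧ 3 * (k : ℤ) ^ 2 - k = 2 * N) ∨
      (∃ k : ℕ, 1 ≤ k ∧ k ≤ N ∧ S = Icc (k + 1) (2 * k) ∧ 3 * (k : ℤ) ^ 2 + k = 2 * N) := by
  rw [mem_filter, TT, mem_filter, mem_powerset] at hS
  obtain ⟨⟨hsub, hsum⟩, hP⟩ := hS
  rcases hP with rfl | ⟨k, hk, rfl | rfl⟩
  · left
    exact ⟨rfl, by simpa using hsum.symm⟩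
  · right; left
    rw [mem_Icc] at hk
    refine ⟨k, hk.1, hk.2, rfl, ?_⟩
    have h1 := sum_pent_neg k hk.1
    rw [hsum] at h1
    have h2 : (N : ℤ) * 2 + k = 3 * (k : ℤ) ^ 2 := by exact_mod_cast h1
    omega
  · right; right
    rw [mem_Icc] at hk
    refine ⟨k, hk.1, hk.2, rfl, ?_⟩
    have h1 := sum_pent_pos k hk.1
    rw [hsum] at h1
    have h2 : (N : ℤ) * 2 = 3 * (k : ℤ) ^ 2 + k := by exact_mod_cast h1
    omega

lemma sum_P (N : ℕ) :
    ∑ S ∈ (TT N).filter (P N), (-1 : ℤ) ^ S.card =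
      ∑ m ∈ Finset.Icc (-(N : ℤ)) (N : ℤ),
        if (3 * m ^ 2 + m) / 2 = (N : ℤ) then (-1 : ℤ) ^ m.natAbs else 0 := by
  rw [← Finset.sum_filter]
  refine Finset.sum_nbij' toZ toSet ?_ ?_ ?_ ?_ ?_
  · -- hi
    intro S hS
    rcases memP_cases hS with ⟨rfl, rfl⟩ | ⟨k, hk1, hkN, rfl, hpent⟩ | ⟨k, hk1, hkN, rfl, hpent⟩
    · rw [toZ_empty, mem_filter, mem_Icc]
      norm_num
    · rw [toZ_neg k hk1, mem_filter, mem_Icc]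
      have hkZ : (k : ℤ) ≤ N := by exact_mod_cast hkN
      refine ⟨⟨by omega, by omega⟩, ?_⟩
      have e : 3 * (-(k : ℤ)) ^ 2 + (-(k : ℤ)) = 3 * (k : ℤ) ^ 2 - k := by ring
      rw [e]
      omega
    · rw [toZ_pos k hk1, mem_filter, mem_Icc]
      have hkZ : (k : ℤ) ≤ N := by exact_mod_cast hkN
      exact ⟨⟨by omega, by omega⟩, by omega⟩
  · -- hj
    intro m hm
    obtain ⟨hpent, hmN1, hmN2⟩ := memZ_cases hm
    rw [mem_filter, TT, mem_filter, mem_powerset]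
    by_cases hm0 : 0 ≤ m
    · obtain ⟨k, hmk⟩ : ∃ k : ℕ, ((k : ℕ) : ℤ) = m := ⟨m.toNat, Int.toNat_of_nonneg hm0⟩
      rw [toSet, if_pos hm0]
      have hkn : m.toNat = k := by omega
      rw [hkn]
      have hpk : 3 * (k : ℤ) ^ 2 + k = 2 * N := by
        have e : ((k : ℕ) : ℤ) ^ 2 = m ^ 2 := by rw [hmk]
        omega
      rcases Nat.eq_zero_or_pos k with hk0 | hk1
      · have hN0 : N = 0 := by
          have e0 : ((k : ℕ) : ℤ) = 0 := by exact_mod_cast hk0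
          have e1 : ((k : ℕ) : ℤ) ^ 2 = 0 := by rw [e0]; ring
          omega
        rw [hk0, hN0]
        have he : Icc (0 + 1) (2 * 0) = (∅ : Finset ℕ) := by
          apply Finset.Icc_eq_empty
          omega
        rw [he]
        exact ⟨⟨empty_subset _, by simp⟩, Or.inl rfl⟩
      · have hpkN : 3 * k ^ 2 + k = 2 * N := by exact_mod_cast hpk
        have hkk : k ≤ k ^ 2 := Nat.le_self_pow (by norm_num) k
        refine ⟨⟨?_, ?_⟩, ?_⟩
        · intro x hx
          rw [mem_Icc] at hx ⊢
          omega
        · have := sum_pent_pos k hk1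
          omega
        · right; exact ⟨k, mem_Icc.2 ⟨hk1, by omega⟩, Or.inr rfl⟩
    · push_neg at hm0
      obtain ⟨k, hmk⟩ : ∃ k : ℕ, ((k : ℕ) : ℤ) = -m := ⟨(-m).toNat, Int.toNat_of_nonneg (by omega)⟩
      have hk1 : 1 ≤ k := by omega
      rw [toSet, if_neg (by omega)]
      have hkn : (-m).toNat = k := by omega
      rw [hkn]
      have hpk : 3 * (k : ℤ) ^ 2 - k = 2 * N := by
        have e : ((k : ℕ) : ℤ) ^ 2 = m ^ 2 := by rw [hmk]; ring
        omega
      have hsq : 2 * (k : ℤ) - 1 ≤ (k : ℤ) ^ 2 := by nlinarith [sq_nonneg ((k : ℤ) - 1)]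
      have hk1Z : (1 : ℤ) ≤ (k : ℤ) := by exact_mod_cast hk1
      have hbound : 2 * (k : ℤ) - 1 ≤ (N : ℤ) := by nlinarith
      refine ⟨⟨?_, ?_⟩, ?_⟩
      · intro x hx
        rw [mem_Icc] at hx ⊢
        omega
      · have h1 := sum_pent_neg k hk1
        have hpkN : 3 * k ^ 2 = 2 * N + k := by exact_mod_cast (by omega : 3 * (k : ℤ) ^ 2 = 2 * N + k)
        omega
      · right; exact ⟨k, mem_Icc.2 ⟨hk1, by omega⟩, Or.inl rfl⟩
  · -- left inverse
    intro S hS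
    rcases memP_cases hS with ⟨rfl, _⟩ | ⟨k, hk1, _, rfl, _⟩ | ⟨k, hk1, _, rfl, _⟩
    · rw [toZ_empty, show (0 : ℤ) = ((0 : ℕ) : ℤ) from rfl, toSet_pos]
      apply Finset.Icc_eq_empty
      omega
    · rw [toZ_neg k hk1, toSet_neg k hk1]
    · rw [toZ_pos k hk1, toSet_pos]
  · -- right inverse
    intro m hm
    obtain ⟨hpent, hmN1, hmN2⟩ := memZ_cases hm
    by_cases hm0 : 0 ≤ m
    · have hmk : ((m.toNat : ℕ) : ℤ) = m := Int.toNat_of_nonneg hm0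
      rw [← hmk, toSet_pos]
      rcases Nat.eq_zero_or_pos m.toNat with hk0 | hk1
      · rw [hk0]
        have he : Icc (0 + 1) (2 * 0) = (∅ : Finset ℕ) := by
          apply Finset.Icc_eq_empty; omega
        rw [he, toZ_empty]
        omega
      · rw [toZ_pos _ hk1]
    · push_neg at hm0
      have hmk : (((-m).toNat : ℕ) : ℤ) = -m := Int.toNat_of_nonneg (by omega)
      have hk1 : 1 ≤ (-m).toNat := by omega
      have e : m = -(((-m).toNat : ℕ) : ℤ) := by omega
      rw [e, toSet_neg _ hk1, toZ_neg _ hk1]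
  · -- values
    intro S hS
    rcases memP_cases hS with ⟨rfl, _⟩ | ⟨k, hk1, _, rfl, _⟩ | ⟨k, hk1, _, rfl, _⟩
    · rw [toZ_empty]; simp
    · rw [toZ_neg k hk1]
      have hc : (Icc k (2 * k - 1)).card = k := by
        rw [Nat.card_Icc]; omega
      rw [hc]
      simp
    · rw [toZ_pos k hk1]
      have hc : (Icc (k + 1) (2 * k)).card = k := by
        rw [Nat.card_Icc]; omega
      rw [hc]
      simp

open PowerSeries in
lemma coeff_prod (N : ℕ) :
    (PowerSeries.coeff N) (∏ n ∈ Finset.Icc 1 N, (1 - PowerSeries.X ^ n)) =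
      ∑ S ∈ TT N, (-1 : ℤ) ^ S.card := by
  have h1 : ∏ n ∈ Finset.Icc 1 N, (1 - PowerSeries.X ^ n : PowerSeries ℤ) =
      ∏ n ∈ Finset.Icc 1 N, ((fun i => -(PowerSeries.X : PowerSeries ℤ) ^ i) n + (fun _ => (1 : PowerSeries ℤ)) n) :=
    Finset.prod_congr rfl fun n _ => by ring
  rw [h1, Finset.prod_add]
  have h2 : ∀ t : Finset ℕ,
      ((∏ i ∈ t, -(PowerSeries.X : PowerSeries ℤ) ^ i) * ∏ i ∈ Finset.Icc 1 N \ t, (1 : PowerSeries ℤ))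
        = PowerSeries.C ((-1) ^ t.card) * PowerSeries.X ^ (∑ i ∈ t, i) := by
    intro t
    rw [Finset.prod_const_one, mul_one]
    calc ∏ i ∈ t, -(PowerSeries.X : PowerSeries ℤ) ^ i
        = ∏ i ∈ t, ((-1) * (PowerSeries.X : PowerSeries ℤ) ^ i) := by
          exact Finset.prod_congr rfl fun i _ => by ring
      _ = (∏ _i ∈ t, (-1 : PowerSeries ℤ)) * ∏ i ∈ t, (PowerSeries.X : PowerSeries ℤ) ^ i :=
          Finset.prod_mul_distrib
      _ = (-1 : PowerSeries ℤ) ^ t.card * PowerSeries.X ^ (∑ i ∈ t, i) := by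
          rw [Finset.prod_const, Finset.prod_pow_eq_pow_sum]
      _ = PowerSeries.C ((-1) ^ t.card) * PowerSeries.X ^ (∑ i ∈ t, i) := by
          rw [map_pow, map_neg, map_one]
  rw [map_sum]
  have h3 : ∀ t ∈ (Finset.Icc 1 N).powerset,
      (PowerSeries.coeff N)
          ((∏ i ∈ t, -(PowerSeries.X : PowerSeries ℤ) ^ i) * ∏ i ∈ Finset.Icc 1 N \ t, (1 : PowerSeries ℤ))
        = if (∑ i ∈ t, i) = N then (-1 : ℤ) ^ t.card else 0 := by
    intro t _
    rw [h2 t, PowerSeries.coeff_C_mul, PowerSeries.coeff_X_pow]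
    by_cases hc : (∑ i ∈ t, i) = N
    · rw [if_pos hc, if_pos hc.symm, mul_one]
    · rw [if_neg hc, if_neg (fun hh => hc hh.symm), mul_zero]
  rw [Finset.sum_congr rfl h3, ← Finset.sum_filter]
  rfl

end Pent

/-- Euler's pentagonal number theorem, stated coefficient-wise: the `N`-th coefficient of
`∏_{n=1}^{N} (1 - X^n)` (which agrees with that of the infinite product) equals
`∑_{m ∈ ℤ} (-1)^m [(3m²+m)/2 = N]`. -/
theorem euler_pentagonal (N : ℕ) :
    (PowerSeries.coeff N) (∏ n ∈ Finset.Icc 1 N, (1 - PowerSeries.X ^ n)) =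
      ∑ m ∈ Finset.Icc (-(N : ℤ)) (N : ℤ),
        if (3 * m ^ 2 + m) / 2 = (N : ℤ) then (-1 : ℤ) ^ m.natAbs else 0 := by
  rw [Pent.coeff_prod, Pent.sum_TT, Pent.sum_P]
end

section
/- Jacobi's identity: the infinite product ∏_{n≥1} (1 - X^n)³ equals ∑_{n≥0} (-1)^n (2n+1) X^{n(n+1)/2} as formal power series. -/
open PowerSeries Finset

namespace JacobiAux

noncomputable section

abbrev R := PowerSeries ℤ

def E (n : ℕ) : R := ∏ k ∈ Finset.Icc 1 n, (1 - PowerSeries.X ^ k)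

lemma E_zero : E 0 = 1 := by simp [E]

lemma E_succ (n : ℕ) : E (n + 1) = E n * (1 - X ^ (n + 1)) := by
  rw [E, E, Finset.prod_Icc_succ_top (by omega)]

lemma constantCoeff_E (n : ℕ) : constantCoeff (E n) = 1 := by
  induction n with
  | zero => simp [E_zero]
  | succ n ih => simp [E_succ, ih]

def Einv (n : ℕ) : R := PowerSeries.invOfUnit (E n) 1

lemma E_mul_Einv (n : ℕ) : E n * Einv n = 1 :=
  PowerSeries.mul_invOfUnit _ _ (by simp [constantCoeff_E])

lemma E_ne_zero (n : ℕ) : E n ≠ 0 := by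
  intro h
  have h2 := E_mul_Einv n
  rw [h, zero_mul] at h2
  exact one_ne_zero h2.symm

lemma Einv_zero : Einv 0 = 1 := by
  have h := E_mul_Einv 0
  rwa [E_zero, one_mul] at h

lemma E_one : E 1 = 1 - X := by simp [E]

lemma Einv_succ (m : ℕ) : Einv m = (1 - X ^ (m + 1)) * Einv (m + 1) := by
  apply mul_left_cancel₀ (E_ne_zero m)
  rw [E_mul_Einv]
  have h := E_mul_Einv (m + 1)
  rw [E_succ] at h
  calc (1:R) = E m * (1 - X ^ (m+1)) * Einv (m+1) := h.symm
    _ = E m * ((1 - X ^ (m+1)) * Einv (m+1)) := by ring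

lemma E_succ_mul_Einv (m : ℕ) : E (m + 1) * Einv m = 1 - X ^ (m + 1) := by
  rw [E_succ]
  calc E m * (1 - X ^ (m+1)) * Einv m = E m * Einv m * (1 - X ^ (m+1)) := by ring
    _ = 1 - X ^ (m+1) := by rw [E_mul_Einv, one_mul]

lemma E_succ2_mul_Einv (m : ℕ) : E (m + 2) * Einv m = (1 - X ^ (m + 1)) * (1 - X ^ (m + 2)) := by
  rw [show m + 2 = (m+1)+1 from rfl, E_succ]
  calc E (m+1) * (1 - X ^ (m+2)) * Einv m = E (m+1) * Einv m * (1 - X ^ (m+2)) := by ring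
    _ = (1 - X ^ (m+1)) * (1 - X ^ (m+2)) := by rw [E_succ_mul_Einv]

/-- exponent `((i-n)(i-n+1)/2).toNat` -/
def e (n i : ℕ) : ℕ := ((((i:ℤ) - n) * ((i:ℤ) - n + 1)) / 2).toNat

lemma e_transfer {n i n' i' c c' : ℕ}
    (h : ((i:ℤ) - n) * (((i:ℤ) - n) + 1) + 2*c = ((i':ℤ) - n') * (((i':ℤ) - n') + 1) + 2*c') :
    c + e n i = c' + e n' i' := by
  unfold e
  set d := (i:ℤ) - n with hd
  set d' := (i':ℤ) - n' with hd'
  have h1 : d * (d+1) = 2 * (d*(d+1)/2) := (Int.two_mul_ediv_two_of_even (Int.even_mul_succ_self d)).symm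
  have h2 : d' * (d'+1) = 2 * (d'*(d'+1)/2) := (Int.two_mul_ediv_two_of_even (Int.even_mul_succ_self d')).symm
  have hn1 : 0 ≤ d * (d+1) := by nlinarith [sq_nonneg (2*d+1)]
  have hn2 : 0 ≤ d' * (d'+1) := by nlinarith [sq_nonneg (2*d'+1)]
  omega

lemma e_zero_left (j : ℕ) : e 0 j = j * (j+1) / 2 := by
  unfold e
  have h3 : ((j:ℤ) - (0:ℕ)) * ((j:ℤ) - (0:ℕ) + 1) = ((j * (j+1) : ℕ) : ℤ) := by push_cast; ring
  rw [h3]; omega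

lemma e_val (n j : ℕ) : e n (n + j) = j * (j+1) / 2 := by
  have h := e_transfer (n := n) (i := n + j) (n' := 0) (i' := j) (c := 0) (c' := 0)
    (by push_cast; ring)
  have h2 := e_zero_left j
  omega

lemma e_val' (m j : ℕ) : e (j + m + 1) m = j * (j+1) / 2 := by
  have h := e_transfer (n := j + m + 1) (i := m) (n' := 0) (i' := j) (c := 0) (c' := 0)
    (by push_cast; ring)
  have h2 := e_zero_left j
  omega

/-- coefficients of the finite Jacobi triple product `∏_{k=1}^n (1 - X^k z)(z - X^{k-1})` -/
def a (n i : ℕ) : R :=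
  if i ≤ 2*n then (-1)^(n+i) * X^(e n i) * (E (2*n) * Einv i * Einv (2*n - i)) else 0


lemma Ra (n : ℕ) : a (n+1) 0 = -X^n * a n 0 := by
  have hx : (X:R)^n * X^(e n 0) = X^(e (n+1) 0) := by
    rw [← pow_add]
    congr 1
    have h := e_transfer (n := n) (i := 0) (n' := n+1) (i' := 0) (c := n) (c' := 0)
      (by push_cast; ring)
    omega
  simp only [a, if_pos (by omega : (0:ℕ) ≤ 2*(n+1)), if_pos (by omega : (0:ℕ) ≤ 2*n)]
  rw [Einv_zero, mul_one, mul_one, Nat.sub_zero, Nat.sub_zero, E_mul_Einv, E_mul_Einv]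
  rw [add_zero, add_zero]
  linear_combination ((-1:R)^(n+1)) * hx.symm

lemma Rb (n : ℕ) : a (n+1) 1 = -X^n * a n 1 + (1+X^(2*n+1)) * a n 0 := by
  have hE1 : (1 - X) * Einv 1 = (1:R) := by rw [← E_one]; exact E_mul_Einv 1
  rcases Nat.eq_zero_or_pos n with rfl | hn
  · simp only [a, if_pos (by omega : (1:ℕ) ≤ 2*1), if_neg (by omega : ¬ (1:ℕ) ≤ 2*0),
      if_pos (by omega : (0:ℕ) ≤ 2*0)]
    have he : e 1 1 = 0 := by have h := e_val 1 0; simpa using h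
    have he0 : e 0 0 = 0 := by have h := e_val 0 0; simpa using h
    rw [show 2*1 - 1 = 1 by omega, show 2*1 = 2 by omega, he, he0,
        show 2*0 = 0 by omega, Nat.sub_zero, Einv_zero, E_zero]
    have h2 : E 2 * Einv 1 = 1 - X^2 := by
      have h := E_succ_mul_Einv 1
      rw [show (1:ℕ)+1 = 2 by ring] at h; exact h
    simp only [pow_zero, mul_one, one_mul]
    linear_combination (Einv 1) * h2 + (1+X) * hE1
  · obtain ⟨m, rfl⟩ : ∃ m, n = m + 1 := ⟨n - 1, by omega⟩
    have he1 : e (m+1+1) 1 = e (m+1) 0 := by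
      have h := e_transfer (n := m+2) (i := 1) (n' := m+1) (i' := 0) (c := 0) (c' := 0)
        (by push_cast; ring)
      simpa using h
    have hx : (X:R)^(m+1) * X^(e (m+1) 1) = X * X^(e (m+1) 0) := by
      rw [← pow_add, ← pow_succ']
      congr 1
      have h := e_transfer (n := m+1) (i := 1) (n' := m+1) (i' := 0) (c := m+1) (c' := 1)
        (by push_cast; ring)
      omega
    simp only [a, if_pos (by omega : (1:ℕ) ≤ 2*(m+1+1)), if_pos (by omega : (1:ℕ) ≤ 2*(m+1)),
      if_pos (by omega : (0:ℕ) ≤ 2*(m+1))]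
    rw [Einv_zero, Nat.sub_zero, mul_one, E_mul_Einv, he1]
    rw [show 2*(m+1+1) - 1 = 2*m+3 by omega, show 2*(m+1+1) = 2*m+4 by omega,
        show 2*(m+1) - 1 = 2*m+1 by omega, show 2*(m+1) = 2*m+2 by omega]
    have h1 : E (2*m+4) * Einv (2*m+3) = 1 - X^(2*m+4) := by
      have h := E_succ_mul_Einv (2*m+3); rw [show 2*m+3+1 = 2*m+4 by ring] at h; exact h
    have h2 : E (2*m+2) * Einv (2*m+1) = 1 - X^(2*m+2) := by
      have h := E_succ_mul_Einv (2*m+1); rw [show 2*m+1+1 = 2*m+2 by ring] at h; exact h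
    linear_combination ((-1:R)^(m+1+1+1) * X^(e (m+1) 0) * Einv 1) * h1
      + (-(-1:R)^(m+1+1) * X^(e (m+1) 1) * Einv 1 * (-X^(m+1))) * h2
      + ((-1:R)^m * Einv 1 * (1 - X^(2*m+2))) * hx
      + ((-1:R)^(m+1) * X^(e (m+1) 0) * (1 + X^(2*m+3))) * hE1

lemma e_step (n i : ℕ) : n + e n (i+1) = (i+1) + e n i := by
  have h := e_transfer (n := n) (i := i+1) (n' := n) (i' := i) (c := n) (c' := i+1)
    (by push_cast; ring)
  omega

lemma Rc (n i : ℕ) :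
    a (n+1) (i+2) = -X^n * a n (i+2) + (1+X^(2*n+1)) * a n (i+1) - X^(n+1) * a n i := by
  have hE1 : (1 - X) * Einv 1 = (1:R) := by rw [← E_one]; exact E_mul_Einv 1
  rcases le_or_gt (i+2) (2*n) with hmain | hbig
  · -- main case i+2 ≤ 2n
    obtain ⟨k, hk⟩ : ∃ k, 2*n = i + k + 2 := ⟨2*n - (i+2), by omega⟩
    have hε : e (n+1) (i+2) = e n (i+1) := by
      have h := e_transfer (n := n+1) (i := i+2) (n' := n) (i' := i+1) (c := 0) (c' := 0)
        (by push_cast; ring)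
      omega
    have hx1 : (X:R)^n * X^(e n (i+2)) = X^(i+2) * X^(e n (i+1)) := by
      rw [← pow_add, ← pow_add]
      congr 1
      have h := e_step n (i+1)
      rw [show i+1+1 = i+2 by ring] at h
      omega
    have hx2 : (X:R)^(n+1) * X^(e n i) = X^(k+2) * X^(e n (i+1)) := by
      rw [← pow_add, ← pow_add]
      congr 1
      have h := e_step n i
      omega
    simp only [a, if_pos (by omega : i+2 ≤ 2*(n+1)), if_pos hmain,
      if_pos (by omega : i+1 ≤ 2*n), if_pos (by omega : i ≤ 2*n)]
    rw [hε]
    rw [show 2*(n+1) - (i+2) = k+2 by omega, show 2*(n+1) = i+k+4 by omega,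
        show 2*n - (i+2) = k by omega, show 2*n - (i+1) = k+1 by omega,
        show 2*n - i = k+2 by omega, show 2*n+1 = i+k+3 by omega,
        show 2*n = i+k+2 by omega]
    have hE4 : E (i+k+4) = E (i+k+2) * ((1 - X^(i+k+3)) * (1 - X^(i+k+4))) := by
      rw [show i+k+4 = (i+k+3)+1 by ring, E_succ, show i+k+3 = (i+k+2)+1 by ring, E_succ]
      ring
    rw [hE4, Einv_succ k, Einv_succ (k+1), Einv_succ i, Einv_succ (i+1)]
    rw [show k+1+1 = k+2 by ring, show i+1+1 = i+2 by ring]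
    linear_combination
      ((-1:R)^(n+i) * E (i+k+2) * Einv (i+2) * Einv (k+2) * (1-X^(k+1)) * (1-X^(k+2))) * hx1
      + ((-1:R)^(n+i) * E (i+k+2) * Einv (i+2) * Einv (k+2) * (1-X^(i+1)) * (1-X^(i+2))) * hx2
  · rcases le_or_gt i (2*n) with hle | hgt
    · rcases (by omega : i = 2*n ∨ i + 1 = 2*n) with h2 | h2
      · -- i = 2n : case (iii)
        subst h2
        have hx : (X:R)^(n+1) * X^(e n (2*n)) = X^(e (n+1) (2*n+2)) := by
          rw [← pow_add]
          congr 1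
          have h := e_transfer (n := n) (i := 2*n) (n' := n+1) (i' := 2*n+2) (c := n+1) (c' := 0)
            (by push_cast; ring)
          omega
        simp only [a, if_pos (by omega : 2*n+2 ≤ 2*(n+1)), if_neg (by omega : ¬ 2*n+2 ≤ 2*n),
          if_neg (by omega : ¬ 2*n+1 ≤ 2*n), if_pos (by omega : 2*n ≤ 2*n)]
        rw [show 2*(n+1) - (2*n+2) = 0 by omega, show 2*(n+1) = 2*n+2 by omega,
            Nat.sub_self, Einv_zero, mul_one, mul_one, E_mul_Einv, E_mul_Einv]
        linear_combination ((-1:R)^(3*n)) * hx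
      · -- i+1 = 2n : case (ii)
        obtain ⟨m, rfl⟩ : ∃ m, n = m + 1 := ⟨n - 1, by omega⟩
        obtain rfl : i = 2*m+1 := by omega
        have hεB : e (m+1+1) (2*m+1+2) = e (m+1) (2*m+2) := by
          have h := e_transfer (n := m+2) (i := 2*m+3) (n' := m+1) (i' := 2*m+2) (c := 0) (c' := 0)
            (by push_cast; ring)
          rw [show m+1+1 = m+2 by ring, show 2*m+1+2 = 2*m+3 by ring]
          omega
        have hx : (X:R)^(m+1+1) * X^(e (m+1) (2*m+1)) = X * X^(e (m+1) (2*m+2)) := by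
          rw [← pow_add, ← pow_succ']
          congr 1
          have h := e_step (m+1) (2*m+1)
          rw [show 2*m+1+1 = 2*m+2 by ring] at h
          omega
        simp only [a, if_pos (by omega : 2*m+1+2 ≤ 2*(m+1+1)), if_neg (by omega : ¬ 2*m+1+2 ≤ 2*(m+1)),
          if_pos (by omega : 2*m+1+1 ≤ 2*(m+1)), if_pos (by omega : 2*m+1 ≤ 2*(m+1))]
        rw [hεB]
        rw [show 2*(m+1+1) - (2*m+1+2) = 1 by omega, show 2*(m+1+1) = 2*m+4 by omega,
            show 2*m+1+2 = 2*m+3 by omega, show 2*m+1+1 = 2*m+2 by omega,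
            show 2*(m+1) - (2*m+2) = 0 by omega, show 2*(m+1) - (2*m+1) = 1 by omega,
            show 2*(m+1)+1 = 2*m+3 by omega, show 2*(m+1) = 2*m+2 by omega]
        have h1 : E (2*m+4) * Einv (2*m+3) = 1 - X^(2*m+4) := by
          have h := E_succ_mul_Einv (2*m+3); rw [show 2*m+3+1 = 2*m+4 by ring] at h; exact h
        have h2 : E (2*m+2) * Einv (2*m+1) = 1 - X^(2*m+2) := by
          have h := E_succ_mul_Einv (2*m+1); rw [show 2*m+1+1 = 2*m+2 by ring] at h; exact h
        rw [h1, h2, Einv_zero, mul_one, E_mul_Einv]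
        have hs : ∀ c : ℕ, ((-1:R))^(3*m+c) = (-1)^(m+c) := by
          intro c; rw [pow_add, pow_add, pow_mul]; norm_num
        rw [show m+1+1+(2*m+3) = 3*m+5 by ring, show m+1+(2*m+2) = 3*m+3 by ring,
            show m+1+(2*m+1) = 3*m+2 by ring, hs 5, hs 3, hs 2]
        linear_combination ((-1:R)^m * (1-X^(2*m+2)) * Einv 1) * hx
          + (-(-1:R)^m * X^(e (m+1) (2*m+2)) * (1+X^(2*m+3))) * hE1
    · -- all zero
      simp only [a, if_neg (by omega : ¬ i+2 ≤ 2*(n+1)), if_neg (by omega : ¬ i+2 ≤ 2*n),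
        if_neg (by omega : ¬ i+1 ≤ 2*n), if_neg (by omega : ¬ i ≤ 2*n)]
      ring
def S (n K : ℕ) : R := ∑ i ∈ Finset.range K, a n i
def T (n K : ℕ) : R := ∑ i ∈ Finset.range K, (i : R) * a n i

lemma a_eq_zero {n i : ℕ} (h : 2*n < i) : a n i = 0 := if_neg (by omega)

lemma S_ext {n K K' : ℕ} (h1 : 2*n+1 ≤ K) (h2 : K ≤ K') : S n K' = S n K := by
  unfold S
  rw [← Finset.sum_subset (Finset.range_subset_range.2 h2)]
  intro x hx hnx
  simp only [Finset.mem_range] at hx hnx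
  exact a_eq_zero (by omega)

lemma T_ext {n K K' : ℕ} (h1 : 2*n+1 ≤ K) (h2 : K ≤ K') : T n K' = T n K := by
  unfold T
  rw [← Finset.sum_subset (Finset.range_subset_range.2 h2)]
  intro x hx hnx
  simp only [Finset.mem_range] at hx hnx
  rw [a_eq_zero (by omega), mul_zero]

lemma hsplit (m : ℕ) (f : ℕ → R) :
    ∑ i ∈ Finset.range (m+2), f i = (∑ i ∈ Finset.range m, f (i+2)) + f 1 + f 0 := by
  rw [Finset.sum_range_succ' f (m+1), Finset.sum_range_succ' (fun i => f (i+1)) m]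

lemma S_rec (n : ℕ) :
    S (n+1) (2*(n+1)+3) = (1 - X^n - X^(n+1) + X^(2*n+1)) * S n (2*n+3) := by
  have h1 : S (n+1) (2*(n+1)+3) =
      (∑ i ∈ Finset.range (2*n+3), a (n+1) (i+2)) + a (n+1) 1 + a (n+1) 0 := by
    unfold S
    rw [show 2*(n+1)+3 = (2*n+3)+2 by ring, hsplit]
  rw [h1, Ra, Rb]
  rw [Finset.sum_congr rfl (fun i _ => Rc n i)]
  rw [Finset.sum_sub_distrib, Finset.sum_add_distrib, ← Finset.mul_sum, ← Finset.mul_sum,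
    ← Finset.mul_sum]
  have h2 : ∑ i ∈ Finset.range (2*n+3), a n (i+2) = S n (2*n+3) - a n 1 - a n 0 := by
    have := hsplit (2*n+3) (a n)
    have hext : S n ((2*n+3)+2) = S n (2*n+3) := S_ext (by omega) (by omega)
    unfold S at hext ⊢
    rw [← hext, this]; ring
  have h3 : ∑ i ∈ Finset.range (2*n+3), a n (i+1) = S n (2*n+3) - a n 0 := by
    have := Finset.sum_range_succ' (a n) (2*n+3)
    have hext : S n ((2*n+3)+1) = S n (2*n+3) := S_ext (by omega) (by omega)
    unfold S at hext ⊢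
    rw [← hext, this]; ring
  rw [h2, h3]
  unfold S
  ring

lemma T_rec (n : ℕ) :
    T (n+1) (2*(n+1)+3) = (1 - X^n - X^(n+1) + X^(2*n+1)) * T n (2*n+3)
      + (1 + X^(2*n+1) - 2*X^(n+1)) * S n (2*n+3) := by
  have h1 : T (n+1) (2*(n+1)+3) =
      (∑ i ∈ Finset.range (2*n+3), ((i:R)+2) * a (n+1) (i+2)) + a (n+1) 1 := by
    unfold T
    rw [show 2*(n+1)+3 = (2*n+3)+2 by ring, hsplit (2*n+3) (fun i => (i:R) * a (n+1) i)]
    push_cast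
    ring
  rw [h1, Rb]
  rw [Finset.sum_congr rfl (fun i _ => by rw [Rc n i])]
  have expand : ∀ i : ℕ, ((i:R)+2) * (-X^n * a n (i+2) + (1+X^(2*n+1)) * a n (i+1) - X^(n+1) * a n i)
      = -X^n * (((i:R)+2) * a n (i+2)) + (1+X^(2*n+1)) * ((((i:R)+1)+1) * a n (i+1))
        - X^(n+1) * ((i:R) * a n i) - X^(n+1) * (2 * a n i) := by
    intro i; ring
  rw [Finset.sum_congr rfl (fun i _ => expand i)]
  rw [Finset.sum_sub_distrib, Finset.sum_sub_distrib, Finset.sum_add_distrib,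
    ← Finset.mul_sum, ← Finset.mul_sum, ← Finset.mul_sum, ← Finset.mul_sum]
  have h2 : ∑ i ∈ Finset.range (2*n+3), ((i:R)+2) * a n (i+2) = T n (2*n+3) - a n 1 := by
    have hs := hsplit (2*n+3) (fun i => (i:R) * a n i)
    have hext : T n ((2*n+3)+2) = T n (2*n+3) := T_ext (by omega) (by omega)
    unfold T at hext ⊢
    rw [← hext, hs]
    push_cast
    ring
  have h3 : ∑ i ∈ Finset.range (2*n+3), (((i:R)+1)+1) * a n (i+1)
      = T n (2*n+3) + S n (2*n+3) - a n 0 := by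
    have hs1 := Finset.sum_range_succ' (fun i => ((i:R)+1) * a n i) (2*n+3)
    have hs2 := Finset.sum_range_succ' (a n) (2*n+3)
    have hextT : T n ((2*n+3)+1) = T n (2*n+3) := T_ext (by omega) (by omega)
    have hextS : S n ((2*n+3)+1) = S n (2*n+3) := S_ext (by omega) (by omega)
    unfold T at hextT
    unfold S at hextS
    have key : ∑ i ∈ Finset.range ((2*n+3)+1), ((i:R)+1) * a n i
        = T n (2*n+3) + S n (2*n+3) := by
      rw [Finset.sum_congr rfl (fun i _ => by push_cast; ring :
          ∀ i ∈ Finset.range ((2*n+3)+1), ((i:R)+1) * a n i = (i:R) * a n i + a n i),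
        Finset.sum_add_distrib, hextT, hextS]
      unfold T S
      rfl
    rw [← key, hs1]
    have : (((0:ℕ):R)+1) * a n 0 = a n 0 := by push_cast; ring
    rw [this]
    have goal2 : ∑ i ∈ Finset.range (2*n+3), (((i:ℕ):R)+1+1) * a n (i+1)
        = ∑ i ∈ Finset.range (2*n+3), ((((i+1:ℕ)):R)+1) * a n (i+1) := by
      apply Finset.sum_congr rfl
      intro i _
      push_cast
      ring
    rw [goal2]
    ring
  have h4 : ∑ i ∈ Finset.range (2*n+3), (2:R) * a n i = 2 * S n (2*n+3) := by
    unfold S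
    rw [Finset.mul_sum]
  rw [h2, h3, h4]
  unfold T S
  ring

lemma hE2inv1 : E 2 * Einv 1 = 1 - X^2 := by
  have h := E_succ_mul_Einv 1
  rw [show (1:ℕ)+1 = 2 by ring] at h; exact h

lemma S_one : S 1 (2*1+3) = 0 := by
  have hE1 : (1 - X) * Einv 1 = (1:R) := by rw [← E_one]; exact E_mul_Einv 1
  unfold S
  rw [show 2*1+3 = 5 by norm_num]
  rw [Finset.sum_range_succ, Finset.sum_range_succ, Finset.sum_range_succ,
    Finset.sum_range_succ, Finset.sum_range_succ, Finset.sum_range_zero]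
  rw [a_eq_zero (by omega : 2*1 < 4), a_eq_zero (by omega : 2*1 < 3)]
  simp only [a, if_pos (by omega : (0:ℕ) ≤ 2*1), if_pos (by omega : (1:ℕ) ≤ 2*1),
    if_pos (by omega : (2:ℕ) ≤ 2*1)]
  have he0 : e 1 0 = 0 := by have h := e_val' 0 0; simpa using h
  have he1 : e 1 1 = 0 := by have h := e_val 1 0; simpa using h
  have he2 : e 1 2 = 1 := by have h := e_val 1 1; simpa using h
  rw [he0, he1, he2, show 2*1 = 2 by norm_num, show 2 - 0 = 2 by norm_num,
    show 2 - 1 = 1 by norm_num, Nat.sub_self, Einv_zero]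
  rw [hE2inv1, mul_one, E_mul_Einv]
  linear_combination ((1:R) + X) * hE1
lemma T_one : T 1 (2*1+3) = E 1 * E 0 := by
  have hE1 : (1 - X) * Einv 1 = (1:R) := by rw [← E_one]; exact E_mul_Einv 1
  unfold T
  rw [show 2*1+3 = 5 by norm_num]
  rw [Finset.sum_range_succ, Finset.sum_range_succ, Finset.sum_range_succ,
    Finset.sum_range_succ, Finset.sum_range_succ, Finset.sum_range_zero]
  rw [a_eq_zero (by omega : 2*1 < 4), a_eq_zero (by omega : 2*1 < 3)]
  simp only [a, if_pos (by omega : (0:ℕ) ≤ 2*1), if_pos (by omega : (1:ℕ) ≤ 2*1),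
    if_pos (by omega : (2:ℕ) ≤ 2*1)]
  have he0 : e 1 0 = 0 := by have h := e_val' 0 0; simpa using h
  have he1 : e 1 1 = 0 := by have h := e_val 1 0; simpa using h
  have he2 : e 1 2 = 1 := by have h := e_val 1 1; simpa using h
  rw [he0, he1, he2, show 2*1 = 2 by norm_num, show 2 - 0 = 2 by norm_num,
    show 2 - 1 = 1 by norm_num, Nat.sub_self, Einv_zero, mul_one, E_mul_Einv, hE2inv1,
    E_one, E_zero]
  push_cast
  linear_combination ((1:R) + X) * hE1

lemma S_val (m : ℕ) : S (m+1) (2*(m+1)+3) = 0 := by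
  induction m with
  | zero => exact S_one
  | succ m ih => rw [S_rec (m+1), ih, mul_zero]

lemma T_val (m : ℕ) : T (m+1) (2*(m+1)+3) = E (m+1) * E m := by
  induction m with
  | zero => exact T_one
  | succ m ih =>
    rw [T_rec (m+1), ih, S_val m, mul_zero, add_zero]
    rw [show m+1+1 = m+2 by ring, show (m+2 : ℕ) = (m+1)+1 by ring, E_succ (m+1), E_succ m]
    ring
lemma e_twice (n i : ℕ) : 2 * (e n i : ℤ) = ((i:ℤ)-n) * (((i:ℤ)-n)+1) := by
  unfold e
  set d := (i:ℤ) - n with hd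
  have h1 : d * (d+1) = 2 * (d*(d+1)/2) := (Int.two_mul_ediv_two_of_even (Int.even_mul_succ_self d)).symm
  have hn1 : 0 ≤ d * (d+1) := by nlinarith [sq_nonneg (2*d+1)]
  omega

lemma emin (N i : ℕ) (h : i ≤ 2*(N+1)) :
    N + 1 ≤ e (N+1) i + (min i (2*(N+1) - i)) + 1 := by
  have ht : 2 * (e (N+1) i : ℤ) = ((i:ℤ)-(N+1)) * (((i:ℤ)-(N+1))+1) := e_twice (N+1) i
  rcases le_total i (N+1) with hle | hge
  · have hmin : min i (2*(N+1) - i) = i := by omega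
    rw [hmin]
    rcases le_or_gt (N+1) (i+1) with hc | hc
    · omega
    · have h1 : (0:ℤ) ≤ (N:ℤ)+1 - i - 2 := by push_cast; omega
      have h2 : (0:ℤ) ≤ (N:ℤ)+1 - i - 1 := by push_cast; omega
      have key : 2*((N:ℤ)+1 - i - 1) ≤ 2 * (e (N+1) i : ℤ) := by
        rw [ht]; nlinarith [mul_nonneg h1 h2]
      omega
  · have hmin : min i (2*(N+1) - i) = 2*(N+1) - i := by omega
    rw [hmin]
    have h1 : (0:ℤ) ≤ (i:ℤ) - (N+1) := by push_cast; omega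
    have key : 2*((i:ℤ) - (N+1) - 1) ≤ 2 * (e (N+1) i : ℤ) := by
      rw [ht]; nlinarith [sq_nonneg ((i:ℤ) - (N+1) - 1)]
    omega

lemma prod_tail_sub_one {N : ℕ} (s : Finset ℕ) (h : ∀ k ∈ s, N+1 ≤ k) :
    (X:R)^(N+1) ∣ (∏ k ∈ s, ((1:R) - X^k)) - 1 := by
  induction s using Finset.cons_induction with
  | empty => simp
  | cons k s hk ih =>
    rw [Finset.prod_cons]
    have h1 : (X:R)^(N+1) ∣ (∏ j ∈ s, ((1:R) - X^j)) - 1 := ih (fun j hj => h j (Finset.mem_cons_of_mem hj))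
    have h2 : (X:R)^(N+1) ∣ X^k := pow_dvd_pow X (h k (Finset.mem_cons_self k s))
    have key : ((1:R) - X^k) * (∏ j ∈ s, ((1:R) - X^j)) - 1
        = ((∏ j ∈ s, ((1:R) - X^j)) - 1) - X^k * (∏ j ∈ s, ((1:R) - X^j)) := by ring
    rw [key]
    exact dvd_sub h1 (h2.mul_right _)

lemma E_factor {N m : ℕ} (h : N ≤ m) : E m = E N * ∏ k ∈ Finset.Ioc N m, ((1:R) - X^k) := by
  unfold E
  rw [show (1:ℕ) = 0 + 1 from rfl, Finset.Icc_add_one_left_eq_Ioc, Finset.Icc_add_one_left_eq_Ioc]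
  exact (Finset.prod_Ioc_consecutive _ (Nat.zero_le N) h).symm

lemma E_mod {N m : ℕ} (h : N ≤ m) : (X:R)^(N+1) ∣ E m - E N := by
  rw [E_factor h]
  have h1 : (X:R)^(N+1) ∣ (∏ k ∈ Finset.Ioc N m, ((1:R) - X^k)) - 1 :=
    prod_tail_sub_one _ (fun k hk => (Finset.mem_Ioc.1 hk).1)
  have key : E N * (∏ k ∈ Finset.Ioc N m, ((1:R) - X^k)) - E N
      = E N * ((∏ k ∈ Finset.Ioc N m, ((1:R) - X^k)) - 1) := by ring
  rw [key]
  exact h1.mul_left _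

lemma EinvE_mod {N m : ℕ} (h : N ≤ m) : (X:R)^(N+1) ∣ E m * Einv N - 1 := by
  have key : E m * Einv N - 1 = (E m - E N) * Einv N + (E N * Einv N - 1) := by ring
  rw [key, E_mul_Einv, sub_self, add_zero]
  exact (E_mod h).mul_right _

lemma dvd_sub_mul {M : ℕ} {x x' y y' : R} (hx : (X:R)^M ∣ x - x') (hy : (X:R)^M ∣ y - y') :
    (X:R)^M ∣ x*y - x'*y' := by
  have key : x*y - x'*y' = (x-x')*y + x'*(y-y') := by ring
  rw [key]
  exact dvd_add (hx.mul_right y) (hy.mul_left x')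

lemma term_mod (N i : ℕ) (h : i ≤ 2*(N+1)) :
    (X:R)^(N+1) ∣ E (2*(N+1)) * a (N+1) i - (-1)^(N+1+i) * X^(e (N+1) i) := by
  have ha : a (N+1) i = (-1)^(N+1+i) * X^(e (N+1) i)
      * (E (2*(N+1)) * Einv i * Einv (2*(N+1) - i)) := by
    rw [a, if_pos h]
  have hu : (X:R)^(i+1) ∣ E (2*(N+1)) * Einv i - 1 := EinvE_mod (by omega)
  have hv : (X:R)^(2*(N+1)-i+1) ∣ E (2*(N+1)) * Einv (2*(N+1)-i) - 1 := EinvE_mod (by omega)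
  have hmin : (X:R)^(min i (2*(N+1)-i) + 1) ∣
      (E (2*(N+1)) * Einv i) * (E (2*(N+1)) * Einv (2*(N+1)-i)) - 1 := by
    have hd := dvd_sub_mul (M := min i (2*(N+1)-i) + 1)
      (x := E (2*(N+1)) * Einv i) (x' := 1) (y := E (2*(N+1)) * Einv (2*(N+1)-i)) (y' := 1)
      (dvd_trans (pow_dvd_pow X (by omega)) hu) (dvd_trans (pow_dvd_pow X (by omega)) hv)
    simpa using hd
  have key : E (2*(N+1)) * a (N+1) i - (-1)^(N+1+i) * X^(e (N+1) i)
      = (-1)^(N+1+i) * X^(e (N+1) i)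
        * ((E (2*(N+1)) * Einv i) * (E (2*(N+1)) * Einv (2*(N+1)-i)) - 1) := by
    rw [ha]; ring
  rw [key, mul_assoc]
  have hdvd : (X:R)^(N+1) ∣ X^(e (N+1) i)
      * ((E (2*(N+1)) * Einv i) * (E (2*(N+1)) * Einv (2*(N+1)-i)) - 1) := by
    obtain ⟨c, hc⟩ := hmin
    rw [hc, ← mul_assoc, ← pow_add]
    refine (pow_dvd_pow X ?_).mul_right c
    have hm := emin N i h
    omega
  exact hdvd.mul_left _
lemma C_int (z : ℤ) : (PowerSeries.C (R := ℤ) z : R) = (z : R) := by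
  have h := map_intCast (PowerSeries.C (R := ℤ)) z
  simpa using h

lemma pair_sum (N : ℕ) :
    ∑ i ∈ Finset.range (2*(N+1)), ((i:R) * ((-1)^(N+1+i) * X^(e (N+1) i)))
      = ∑ j ∈ Finset.range (N+1), (PowerSeries.C (R := ℤ) ((-1)^j * (2*j+1)) * X^(j*(j+1)/2)) := by
  rw [show 2*(N+1) = (N+1) + (N+1) by ring, Finset.sum_range_add]
  rw [← Finset.sum_range_reflect (fun i => (i:R) * ((-1)^(N+1+i) * X^(e (N+1) i))) (N+1)]
  rw [← Finset.sum_add_distrib]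
  apply Finset.sum_congr rfl
  intro j hj
  simp only [Finset.mem_range] at hj
  obtain ⟨m, hm⟩ : ∃ m, N = j + m := ⟨N - j, by omega⟩
  subst hm
  rw [show j+m+1-1-j = m by omega]
  rw [e_val (j+m+1) j, e_val' m j]
  have hs1 : ((-1:R))^((j+m+1)+(j+m+1+j)) = (-1)^j := by
    rw [show (j+m+1)+(j+m+1+j) = 2*(j+m+1) + j by ring, pow_add, pow_mul]
    norm_num
  have hs2 : ((-1:R))^((j+m+1)+m) = (-1)^(j+1) := by
    rw [show (j+m+1)+m = 2*m + (j+1) by ring, pow_add, pow_mul]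
    norm_num
  rw [hs1, hs2, C_int]
  push_cast
  ring

lemma main_mod (N : ℕ) :
    (X:R)^(N+1) ∣ (E N)^3
      - ∑ j ∈ Finset.range (N+1), (PowerSeries.C (R := ℤ) ((-1)^j * (2*j+1)) * X^(j*(j+1)/2)) := by
  have hQ : E (2*(N+1)) * (E (N+1) * E N)
      = ∑ i ∈ Finset.range (2*(N+1)+1), (i:R) * (E (2*(N+1)) * a (N+1) i) := by
    have h1 : T (N+1) (2*(N+1)+3) = T (N+1) (2*(N+1)+1) := T_ext (by omega) (by omega)
    have h2 := T_val N
    rw [h1] at h2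
    rw [← h2]
    unfold T
    rw [Finset.mul_sum]
    exact Finset.sum_congr rfl (fun i _ => by ring)
  have hdvd1 : (X:R)^(N+1) ∣
      (∑ i ∈ Finset.range (2*(N+1)+1), (i:R) * (E (2*(N+1)) * a (N+1) i))
      - ∑ i ∈ Finset.range (2*(N+1)+1), (i:R) * ((-1)^(N+1+i) * X^(e (N+1) i)) := by
    rw [← Finset.sum_sub_distrib]
    apply Finset.dvd_sum
    intro i hi
    simp only [Finset.mem_range] at hi
    rw [← mul_sub]
    exact (term_mod N i (by omega)).mul_left _
  have htail : (X:R)^(N+1) ∣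
      ((2*(N+1) : ℕ):R) * ((-1)^(N+1+2*(N+1)) * X^(e (N+1) (2*(N+1)))) := by
    have he : e (N+1) (2*(N+1)) = (N+1)*((N+1)+1)/2 := by
      have h := e_val (N+1) (N+1)
      rw [show (N+1) + (N+1) = 2*(N+1) by ring] at h
      exact h
    have hge : N+1 ≤ (N+1)*((N+1)+1)/2 := by
      rw [Nat.le_div_iff_mul_le (by norm_num)]
      nlinarith
    rw [he]
    exact ((pow_dvd_pow X hge).mul_left _).mul_left _
  have hsplit2 : ∑ i ∈ Finset.range (2*(N+1)+1), (i:R) * ((-1)^(N+1+i) * X^(e (N+1) i))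
      = (∑ j ∈ Finset.range (N+1), (PowerSeries.C (R := ℤ) ((-1)^j * (2*j+1)) * X^(j*(j+1)/2)))
        + ((2*(N+1) : ℕ):R) * ((-1)^(N+1+2*(N+1)) * X^(e (N+1) (2*(N+1)))) := by
    rw [Finset.sum_range_succ, pair_sum]
  have hE3 : (X:R)^(N+1) ∣ E (2*(N+1)) * (E (N+1) * E N) - (E N)^3 := by
    have h := dvd_sub_mul (M := N+1) (E_mod (by omega : N ≤ 2*(N+1)))
      (dvd_sub_mul (M := N+1) (E_mod (by omega : N ≤ N+1)) (by simp : (X:R)^(N+1) ∣ E N - E N))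
    have key : E N * (E N * E N) = (E N)^3 := by ring
    rwa [key] at h
  have total : (E N)^3
      - ∑ j ∈ Finset.range (N+1), (PowerSeries.C (R := ℤ) ((-1)^j * (2*j+1)) * X^(j*(j+1)/2))
      = -(E (2*(N+1)) * (E (N+1) * E N) - (E N)^3)
        + ((∑ i ∈ Finset.range (2*(N+1)+1), (i:R) * (E (2*(N+1)) * a (N+1) i))
            - ∑ i ∈ Finset.range (2*(N+1)+1), (i:R) * ((-1)^(N+1+i) * X^(e (N+1) i)))
        + ((2*(N+1) : ℕ):R) * ((-1)^(N+1+2*(N+1)) * X^(e (N+1) (2*(N+1)))) := by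
    rw [← hQ, hsplit2]
    ring
  rw [total]
  exact dvd_add (dvd_add (dvd_neg.mpr hE3) hdvd1) htail

end

end JacobiAux

/-- Jacobi's identity, stated coefficient-wise: the `N`-th coefficient of
`∏_{n=1}^{N} (1 - X^n)³` equals `∑_{m ≥ 0} (-1)^m (2m+1) [m(m+1)/2 = N]`. -/
theorem jacobi_identity (N : ℕ) :
    (PowerSeries.coeff (R := ℤ) N) (∏ n ∈ Finset.Icc 1 N, (1 - PowerSeries.X ^ n) ^ 3) =
      ∑ m ∈ Finset.range (N + 1),
        if m * (m + 1) / 2 = N then (-1 : ℤ) ^ m * (2 * m + 1) else 0 := by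
  classical
  have hprod : ∏ n ∈ Finset.Icc 1 N, (1 - PowerSeries.X ^ n) ^ 3 = (JacobiAux.E N)^3 := by
    rw [JacobiAux.E, ← Finset.prod_pow]
  rw [hprod]
  have h := JacobiAux.main_mod N
  rw [PowerSeries.X_pow_dvd_iff] at h
  have hc := h N (by omega)
  rw [map_sub, sub_eq_zero] at hc
  rw [hc, map_sum]
  apply Finset.sum_congr rfl
  intro m _
  rw [PowerSeries.coeff_C_mul_X_pow]
  rcases eq_or_ne (m*(m+1)/2) N with h' | h'
  · rw [if_pos h', if_pos h'.symm]
  · rw [if_neg h', if_neg (Ne.symm h')]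
end

section
/- Let a₁(n) be the coefficients defined by ∏_{n≥1}(1 - X^n) = ∑_{n≥0} a₁(n) X^n. Then a₁(n) ≠ 0 if and only if n = (3m²+m)/2 for some integer m, in which case a₁(n) = (-1)^m. -/
open Finset

attribute [local instance] Classical.propDecidable

/-- The `n`-th Fourier coefficient of the Euler product `∏ (1 - X^k)`. -/
noncomputable def a1 (n : ℕ) : ℤ :=
  (PowerSeries.coeff (R := ℤ) n) (∏ k ∈ Finset.Icc 1 n, (1 - PowerSeries.X ^ k))

namespace Pent


noncomputable def rr (S : Finset ℕ) : ℕ :=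
  if h : S.Nonempty then
    (S.filter fun x => Finset.Icc x (S.max' h) ⊆ S).min'
      ⟨S.max' h, by simp [Finset.mem_filter, S.max'_mem h]⟩
  else 0

lemma rr_spec (S : Finset ℕ) (h : S.Nonempty) :
    rr S ∈ S ∧ Finset.Icc (rr S) (S.max' h) ⊆ S := by
  rw [rr, dif_pos h]
  have := Finset.min'_mem (S.filter fun x => Finset.Icc x (S.max' h) ⊆ S)
    ⟨S.max' h, by simp [Finset.mem_filter, S.max'_mem h]⟩
  simpa [Finset.mem_filter] using this

lemma rr_le (S : Finset ℕ) (h : S.Nonempty) {x : ℕ} (hx : x ∈ S)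
    (hrun : Finset.Icc x (S.max' h) ⊆ S) : rr S ≤ x := by
  rw [rr, dif_pos h]
  exact Finset.min'_le _ _ (Finset.mem_filter.2 ⟨hx, hrun⟩)

lemma rr_eq (S : Finset ℕ) (h : S.Nonempty) {a : ℕ} (ha : a ∈ S)
    (hrun : Finset.Icc a (S.max' h) ⊆ S) (hb : a - 1 ∉ S) (h1 : 1 ≤ a) : rr S = a := by
  obtain ⟨hrS, hrrun⟩ := rr_spec S h
  have hle : rr S ≤ a := rr_le S h ha hrun
  rcases eq_or_lt_of_le hle with heq | hlt
  · exact heq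
  · exfalso
    have haM : a ≤ S.max' h := S.le_max' a ha
    exact hb (hrrun (Finset.mem_Icc.2 ⟨by omega, by omega⟩))

def Exc (S : Finset ℕ) : Prop :=
  ∃ a : ℕ, 1 ≤ a ∧ (S = Finset.Icc a (2*a-1) ∨ (2 ≤ a ∧ S = Finset.Icc a (2*a-2)))

noncomputable def gg (S : Finset ℕ) : Finset ℕ :=
  if h : S.Nonempty then
    if S.min' h + rr S ≤ S.max' h + 1 then
      insert (S.max' h + 1) ((S.erase (S.min' h)).erase (S.max' h - S.min' h + 1))
    else insert (S.max' h - rr S + 1) (insert (rr S - 1) (S.erase (S.max' h)))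
  else ∅

lemma master (S : Finset ℕ) (hne : S.Nonempty) (h0 : 0 ∉ S) (hexc : ¬ Exc S) :
    (gg S).sum id = S.sum id ∧ 0 ∉ gg S ∧ ¬ Exc (gg S) ∧ gg (gg S) = S ∧
      ((gg S).card = S.card + 1 ∨ S.card = (gg S).card + 1) := by
  set M := S.max' hne with hMdef
  set s := S.min' hne with hsdef
  set r := rr S with hrdef
  obtain ⟨hrS, hrun⟩ := rr_spec S hne
  rw [← hMdef, ← hrdef] at hrun
  have hsS : s ∈ S := S.min'_mem hne
  have hMS : M ∈ S := S.max'_mem hne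
  have hub : ∀ x ∈ S, x ≤ M := fun x hx => S.le_max' x hx
  have hlb : ∀ x ∈ S, s ≤ x := fun x hx => S.min'_le x hx
  have hs1 : 1 ≤ s := by
    rcases Nat.eq_zero_or_pos s with h | h
    · exact absurd (h ▸ hsS) h0
    · exact h
  have hsr : s ≤ r := hlb r hrS
  have hrM : r ≤ M := hub r hrS
  by_cases hA : s + r ≤ M + 1
  · -- Case A
    set T := insert (M + 1) ((S.erase s).erase (M - s + 1)) with hTdef
    have hggS : gg S = T := by
      rw [gg, dif_pos hne, if_pos]
      exact hA
    have hM2s : 2 * s ≤ M := by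
      by_contra hcon
      push_neg at hcon
      have hMeq : M = 2 * s - 1 := by omega
      have hreq : r = s := by omega
      apply hexc
      refine ⟨s, hs1, Or.inl ?_⟩
      apply Finset.Subset.antisymm
      · intro x hx
        rw [Finset.mem_Icc]
        exact ⟨hlb x hx, by have := hub x hx; omega⟩
      · intro x hx
        rw [Finset.mem_Icc] at hx
        exact hrun (Finset.mem_Icc.2 ⟨by omega, by omega⟩)
    have hmem1 : M - s + 1 ∈ S := hrun (Finset.mem_Icc.2 ⟨by omega, by omega⟩)
    have hM1 : M + 1 ∉ S := fun h => by have := hub _ h; omega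
    have hTmem : ∀ x, x ∈ T ↔ x = M + 1 ∨ (x ∈ S ∧ x ≠ s ∧ x ≠ M - s + 1) := by
      intro x
      simp only [hTdef, Finset.mem_insert, Finset.mem_erase]
      tauto
    -- sum
    have hm1e : M - s + 1 ∈ S.erase s := Finset.mem_erase.2 ⟨by omega, hmem1⟩
    have hM1e : M + 1 ∉ (S.erase s).erase (M - s + 1) := fun h =>
      hM1 (Finset.mem_of_mem_erase (Finset.mem_of_mem_erase h))
    have e3 : T.sum id = (M + 1) + ((S.erase s).erase (M - s + 1)).sum id :=
      Finset.sum_insert hM1e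
    have e1 : ((S.erase s).erase (M - s + 1)).sum id + (M - s + 1) = (S.erase s).sum id :=
      Finset.sum_erase_add _ _ hm1e
    have e2 : (S.erase s).sum id + s = S.sum id := Finset.sum_erase_add _ _ hsS
    simp only [id_eq] at e1 e2 e3
    have hsum : T.sum id = S.sum id := by simp only [id_eq]; omega
    -- card
    have c3 : T.card = ((S.erase s).erase (M - s + 1)).card + 1 :=
      Finset.card_insert_of_notMem hM1e
    have c1 : ((S.erase s).erase (M - s + 1)).card = (S.erase s).card - 1 :=
      Finset.card_erase_of_mem hm1e
    have c2 : (S.erase s).card = S.card - 1 := Finset.card_erase_of_mem hsS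
    have cpos : 0 < (S.erase s).card := Finset.card_pos.2 ⟨_, hm1e⟩
    have hcard : S.card = T.card + 1 := by omega
    -- 0 ∉ T
    have h0T : 0 ∉ T := by
      rw [hTmem]
      rintro (h | ⟨h, -, -⟩)
      · omega
      · exact h0 h
    -- invariants of T
    have hTne : T.Nonempty := ⟨M + 1, Finset.mem_insert_self _ _⟩
    have hTmax : T.max' hTne = M + 1 := by
      apply le_antisymm
      · apply Finset.max'_le
        intro x hx
        rcases (hTmem x).1 hx with h | ⟨h, -, -⟩
        · omega
        · have := hub x h; omega
      · exact Finset.le_max' _ _ (Finset.mem_insert_self _ _)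
    have hTmin : s + 1 ≤ T.min' hTne := by
      apply Finset.le_min'
      intro y hy
      rcases (hTmem y).1 hy with h | ⟨h, h2, -⟩
      · have := hub s hsS; omega
      · have := hlb y h; omega
    have hTrr : rr T = M - s + 2 := by
      apply rr_eq T hTne
      · rw [hTmem]
        by_cases hs2 : s = 1
        · left; omega
        · right
          refine ⟨hrun (Finset.mem_Icc.2 ⟨by omega, by omega⟩), by omega, by omega⟩
      · rw [hTmax]
        intro x hx
        rw [Finset.mem_Icc] at hx
        rw [hTmem]
        rcases eq_or_lt_of_le hx.2 with h | h
        · left; omega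
        · right
          exact ⟨hrun (Finset.mem_Icc.2 ⟨by omega, by omega⟩), by omega, by omega⟩
      · have heq : M - s + 2 - 1 = M - s + 1 := by omega
        rw [heq, hTmem]
        rintro (h | ⟨-, -, h⟩)
        · omega
        · exact h rfl
      · omega
    -- gg T = S
    have hggT : gg T = S := by
      rw [gg, dif_pos hTne, if_neg (by rw [hTmax, hTrr]; omega)]
      rw [hTmax, hTrr]
      have r1 : M + 1 - (M - s + 2) + 1 = s := by omega
      have r2 : M - s + 2 - 1 = M - s + 1 := by omega
      rw [r1, r2]
      have r3 : T.erase (M + 1) = (S.erase s).erase (M - s + 1) := by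
        rw [hTdef, Finset.erase_insert hM1e]
      rw [r3]
      ext x
      simp only [Finset.mem_insert, Finset.mem_erase]
      constructor
      · rintro (rfl | rfl | ⟨-, -, h⟩)
        · exact hsS
        · exact hmem1
        · exact h
      · intro hx
        by_cases h1 : x = s
        · left; exact h1
        · by_cases h2 : x = M - s + 1
          · right; left; exact h2
          · right; right; exact ⟨h2, h1, hx⟩
    -- ¬ Exc T
    have hnexcT : ¬ Exc T := by
      rintro ⟨a, ha1, hform⟩
      have hb : ∃ b, (b = 2*a - 1 ∨ (2 ≤ a ∧ b = 2*a-2)) ∧ T = Finset.Icc a b := by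
        rcases hform with h | ⟨h2, h⟩
        · exact ⟨2*a-1, Or.inl rfl, h⟩
        · exact ⟨2*a-2, Or.inr ⟨h2, rfl⟩, h⟩
      obtain ⟨b, hbform, hTIcc⟩ := hb
      have hab : a ≤ b := by omega
      have key : ∀ x, (a ≤ x ∧ x ≤ b) ↔ (x = M + 1 ∨ (x ∈ S ∧ x ≠ s ∧ x ≠ M - s + 1)) := by
        intro x
        rw [← Finset.mem_Icc, ← hTIcc, hTmem]
      have k1 : a ≤ M + 1 ∧ M + 1 ≤ b := (key (M+1)).2 (Or.inl rfl)
      have k2 : a ≤ M - s + 2 ∧ M - s + 2 ≤ b := by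
        apply (key _).2
        by_cases hs2 : s = 1
        · left; omega
        · right
          exact ⟨hrun (Finset.mem_Icc.2 ⟨by omega, by omega⟩), by omega, by omega⟩
      have k3 : ¬ (a ≤ M - s + 1 ∧ M - s + 1 ≤ b) := by
        rw [key]
        rintro (h | ⟨-, -, h⟩)
        · omega
        · exact h rfl
      have k4 : b = M + 1 ∨ (b ∈ S) := by
        rcases (key b).1 ⟨hab, le_refl b⟩ with h | ⟨h, -, -⟩
        · left; exact h
        · right; exact h
      rcases k4 with h | h
      · omega
      · have := hub b h; omega
    exact ⟨by rw [hggS]; exact hsum, by rw [hggS]; exact h0T, by rw [hggS]; exact hnexcT,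
      by rw [hggS]; exact hggT, by rw [hggS]; right; exact hcard⟩
  · -- Case B
    push_neg at hA
    set T := insert (M - r + 1) (insert (r - 1) (S.erase M)) with hTdef
    have hggS : gg S = T := by
      rw [gg, dif_pos hne, if_neg]
      omega
    have hσs : M - r + 1 < s := by omega
    have hr2 : 2 ≤ r := by omega
    have hM2r : M ≤ 2 * r - 2 := by omega
    have hrm1 : r - 1 ∉ S := by
      intro hcon
      have : Finset.Icc (r-1) M ⊆ S := by
        intro x hx
        rw [Finset.mem_Icc] at hx
        rcases eq_or_lt_of_le hx.1 with h | h
        · rwa [h] at hcon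
        · exact hrun (Finset.mem_Icc.2 ⟨by omega, hx.2⟩)
      have := rr_le S hne hcon (by rw [← hMdef]; exact this)
      omega
    have hM2r3 : M ≤ 2 * r - 3 := by
      rcases eq_or_lt_of_le hM2r with h | h
      · exfalso
        apply hexc
        have hseq : s = r := by omega
        refine ⟨r, by omega, Or.inr ⟨hr2, ?_⟩⟩
        apply Finset.Subset.antisymm
        · intro x hx
          rw [Finset.mem_Icc]
          exact ⟨by have := hlb x hx; omega, by have := hub x hx; omega⟩
        · intro x hx
          rw [Finset.mem_Icc] at hx
          exact hrun (Finset.mem_Icc.2 ⟨by omega, by omega⟩)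
      · omega
    have hσS : M - r + 1 ∉ S := fun h => by have := hlb _ h; omega
    have hTmem : ∀ x, x ∈ T ↔ x = M - r + 1 ∨ x = r - 1 ∨ (x ∈ S ∧ x ≠ M) := by
      intro x
      simp only [hTdef, Finset.mem_insert, Finset.mem_erase]
      tauto
    have hσni : M - r + 1 ∉ insert (r-1) (S.erase M) := by
      simp only [Finset.mem_insert, Finset.mem_erase]
      rintro (h | ⟨-, h⟩)
      · omega
      · exact hσS h
    have hrni : r - 1 ∉ S.erase M := fun h => hrm1 (Finset.mem_of_mem_erase h)
    -- sum
    have e3 : T.sum id = (M - r + 1) + (insert (r-1) (S.erase M)).sum id :=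
      Finset.sum_insert hσni
    have e2 : (insert (r-1) (S.erase M)).sum id = (r-1) + (S.erase M).sum id :=
      Finset.sum_insert hrni
    have e1 : (S.erase M).sum id + M = S.sum id := Finset.sum_erase_add _ _ hMS
    simp only [id_eq] at e1 e2 e3
    have hsum : T.sum id = S.sum id := by simp only [id_eq]; omega
    -- card
    have c3 : T.card = (insert (r-1) (S.erase M)).card + 1 := Finset.card_insert_of_notMem hσni
    have c2 : (insert (r-1) (S.erase M)).card = (S.erase M).card + 1 :=
      Finset.card_insert_of_notMem hrni
    have c1 : (S.erase M).card = S.card - 1 := Finset.card_erase_of_mem hMS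
    have cpos : 0 < S.card := Finset.card_pos.2 hne
    have hcard : T.card = S.card + 1 := by omega
    have h0T : 0 ∉ T := by
      rw [hTmem]
      rintro (h | h | ⟨h, -⟩)
      · omega
      · omega
      · exact h0 h
    have hTne : T.Nonempty := ⟨M - r + 1, Finset.mem_insert_self _ _⟩
    have hMm1T : M - 1 ∈ T := by
      rw [hTmem]
      by_cases h : r ≤ M - 1
      · right; right
        exact ⟨hrun (Finset.mem_Icc.2 ⟨by omega, by omega⟩), by omega⟩
      · right; left; omega
    have hTmax : T.max' hTne = M - 1 := by
      apply le_antisymm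
      · apply Finset.max'_le
        intro x hx
        rcases (hTmem x).1 hx with h | h | ⟨h, h2⟩
        · omega
        · omega
        · have := hub x h; omega
      · exact Finset.le_max' _ _ hMm1T
    have hTmin : T.min' hTne = M - r + 1 := by
      apply le_antisymm
      · exact Finset.min'_le _ _ (Finset.mem_insert_self _ _)
      · apply Finset.le_min'
        intro y hy
        rcases (hTmem y).1 hy with h | h | ⟨h, -⟩
        · omega
        · omega
        · have := hlb y h; omega
    have hTrrle : rr T ≤ r - 1 := by
      apply rr_le T hTne
      · rw [hTmem]; right; left; rfl
      · rw [hTmax]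
        intro x hx
        rw [Finset.mem_Icc] at hx
        rw [hTmem]
        rcases eq_or_lt_of_le hx.1 with h | h
        · right; left; omega
        · right; right
          exact ⟨hrun (Finset.mem_Icc.2 ⟨by omega, by omega⟩), by omega⟩
    have hggT : gg T = S := by
      rw [gg, dif_pos hTne, if_pos (by rw [hTmax, hTmin]; omega)]
      rw [hTmax, hTmin]
      have r1 : M - 1 + 1 = M := by omega
      have r2 : M - 1 - (M - r + 1) + 1 = r - 1 := by omega
      rw [r1, r2]
      have r3 : T.erase (M - r + 1) = insert (r-1) (S.erase M) := by
        rw [hTdef, Finset.erase_insert hσni]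
      rw [r3, Finset.erase_insert hrni, Finset.insert_erase hMS]
    have hnexcT : ¬ Exc T := by
      rintro ⟨a, ha1, hform⟩
      have hb : ∃ b, (b = 2*a - 1 ∨ (2 ≤ a ∧ b = 2*a-2)) ∧ T = Finset.Icc a b := by
        rcases hform with h | ⟨h2, h⟩
        · exact ⟨2*a-1, Or.inl rfl, h⟩
        · exact ⟨2*a-2, Or.inr ⟨h2, rfl⟩, h⟩
      obtain ⟨b, hbform, hTIcc⟩ := hb
      have hab : a ≤ b := by omega
      have key : ∀ x, (a ≤ x ∧ x ≤ b) ↔ (x = M - r + 1 ∨ x = r - 1 ∨ (x ∈ S ∧ x ≠ M)) := by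
        intro x
        rw [← Finset.mem_Icc, ← hTIcc, hTmem]
      have k1 : a ≤ M - r + 1 ∧ M - r + 1 ≤ b := (key _).2 (Or.inl rfl)
      have k2 : a ≤ M - 1 ∧ M - 1 ≤ b := by
        rw [← Finset.mem_Icc, ← hTIcc]
        exact hMm1T
      have k3 := (key a).1 ⟨le_refl a, hab⟩
      have k4 := (key b).1 ⟨hab, le_refl b⟩
      rcases k3 with h3 | h3 | ⟨h3, -⟩
      all_goals rcases k4 with h4 | h4 | ⟨h4, h4'⟩
      all_goals first
        | (have := hub b h4; have := hlb b h4; omega)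
        | (have := hub a h3; have := hlb a h3; omega)
        | omega
    exact ⟨by rw [hggS]; exact hsum, by rw [hggS]; exact h0T, by rw [hggS]; exact hnexcT,
      by rw [hggS]; exact hggT, by rw [hggS]; left; exact hcard⟩


lemma sum_Icc (a c : ℕ) : (∑ i ∈ Finset.Icc a (a + c), i) * 2 = (2*a + c)*(c+1) := by
  induction c with
  | zero => simp [Finset.Icc_self]; ring
  | succ c ih =>
    have h1 : Finset.Icc a (a + (c+1)) = insert (a+c+1) (Finset.Icc a (a+c)) := by
      rw [show a + (c+1) = (a+c) + 1 by omega, ← Finset.insert_Icc_right_eq_Icc_add_one (by omega)]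
    rw [h1, Finset.sum_insert (by simp [Finset.mem_Icc]), add_mul, ih]
    ring

lemma pent_unique {a b : ℤ} (h : 3*a^2+a = 3*b^2+b) : a = b := by
  have h2 : (a - b) * (3*a + 3*b + 1) = 0 := by linear_combination h
  rcases mul_eq_zero.1 h2 with h | h <;> omega

lemma exc_sum (S : Finset ℕ) (hS : Exc S) :
    ∃ a : ℕ, 1 ≤ a ∧ ((S = Finset.Icc a (2*a-1) ∧ (S.sum id) * 2 = a*(3*a-1) ∧ S.card = a)
      ∨ (2 ≤ a ∧ S = Finset.Icc a (2*a-2) ∧ (S.sum id)*2 = (a-1)*(3*a-2) ∧ S.card = a - 1)) := by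
  obtain ⟨a, ha1, hform⟩ := hS
  refine ⟨a, ha1, ?_⟩
  have hid : ∀ T : Finset ℕ, T.sum id = ∑ x ∈ T, x := fun T => rfl
  rcases hform with h | ⟨ha2, h⟩
  · left
    refine ⟨h, ?_, ?_⟩
    · rw [h, hid]
      have := sum_Icc a (a-1)
      rw [show a + (a-1) = 2*a-1 by omega] at this
      rw [this]
      obtain ⟨a', rfl⟩ : ∃ a', a = a' + 1 := ⟨a - 1, by omega⟩
      simp only [Nat.add_sub_cancel]
      rw [show 3*(a'+1)-1 = 3*a'+2 by omega]
      ring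
    · rw [h, Nat.card_Icc]; omega
  · right
    refine ⟨ha2, h, ?_, ?_⟩
    · rw [h, hid]
      have := sum_Icc a (a-2)
      rw [show a + (a-2) = 2*a-2 by omega] at this
      rw [this]
      obtain ⟨a', rfl⟩ : ∃ a', a = a' + 2 := ⟨a - 2, by omega⟩
      simp only [Nat.add_sub_cancel]
      rw [show (a'+2)-1 = a'+1 by omega, show 3*(a'+2)-2 = 3*a'+4 by omega]
      ring
    · rw [h, Nat.card_Icc]; omega

/-- The involution kills everything non-exceptional. -/
lemma sum_nexc_zero (n : ℕ) (hn : 1 ≤ n) :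
    ∑ S ∈ (Finset.Icc 1 n).powerset.filter (fun S => S.sum id = n ∧ ¬ Exc S),
      ((-1:ℤ)^S.card) = 0 := by
  set G := (Finset.Icc 1 n).powerset.filter (fun S => S.sum id = n ∧ ¬ Exc S) with hG
  have key : ∀ S ∈ G, gg (gg S) = S ∧
      ((gg S).card = S.card + 1 ∨ S.card = (gg S).card + 1) ∧ gg S ∈ G := by
    intro S hS
    rw [hG, Finset.mem_filter, Finset.mem_powerset] at hS
    obtain ⟨hsub, hsum, hnexc⟩ := hS
    have hne : S.Nonempty := by
      rcases S.eq_empty_or_nonempty with h | h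
      · exfalso; rw [h] at hsum; simp at hsum; omega
      · exact h
    have h0 : 0 ∉ S := fun h => by
      have := hsub h; rw [Finset.mem_Icc] at this; omega
    obtain ⟨m1, m2, m3, m4, m5⟩ := master S hne h0 hnexc
    refine ⟨m4, m5, ?_⟩
    rw [hG, Finset.mem_filter, Finset.mem_powerset]
    refine ⟨?_, by rw [m1, hsum], m3⟩
    intro x hx
    rw [Finset.mem_Icc]
    have hx0 : x ≠ 0 := fun hx0 => m2 (hx0 ▸ hx)
    have hle : id x ≤ (gg S).sum id :=
      Finset.single_le_sum (f := (id : ℕ → ℕ)) (fun i _ => Nat.zero_le _) hx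
    simp only [id_eq] at hle
    have h2 : ∑ x ∈ gg S, x = n := by simpa using m1.trans hsum
    omega
  refine Finset.sum_involution (fun S _ => gg S) ?_ ?_ (fun S hS => (key S hS).2.2) ?_
  · intro S hS
    rcases (key S hS).2.1 with h | h <;> rw [h, pow_succ] <;> ring
  · intro S hS _ heq
    have heq' : gg S = S := heq
    have hcc := congrArg Finset.card heq'
    rcases (key S hS).2.1 with h | h <;> omega
  · intro S hS
    exact (key S hS).1

lemma a1_eq_sum (n : ℕ) :
    a1 n = ∑ S ∈ (Finset.Icc 1 n).powerset.filter (fun S => S.sum id = n), (-1:ℤ)^S.card := by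
  rw [a1]
  have h1 : ∀ k ∈ Finset.Icc 1 n, (1 - PowerSeries.X ^ k : PowerSeries ℤ) =
      (fun k => -(PowerSeries.X ^ k : PowerSeries ℤ)) k + (fun _ => (1 : PowerSeries ℤ)) k := by
    intro k _
    simp only
    ring
  rw [Finset.prod_congr rfl h1, Finset.prod_add, map_sum, Finset.sum_filter]
  apply Finset.sum_congr rfl
  intro t ht
  have h2 : ∏ i ∈ t, -(PowerSeries.X ^ i : PowerSeries ℤ) =
      PowerSeries.C (R := ℤ) ((-1)^t.card) * PowerSeries.X ^ (t.sum id) := by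
    calc ∏ i ∈ t, -(PowerSeries.X ^ i : PowerSeries ℤ)
        = ∏ i ∈ t, ((-1) * PowerSeries.X ^ i : PowerSeries ℤ) := by
          apply Finset.prod_congr rfl; intro i _; ring
      _ = (∏ _i ∈ t, (-1 : PowerSeries ℤ)) * ∏ i ∈ t, (PowerSeries.X : PowerSeries ℤ) ^ i :=
          Finset.prod_mul_distrib
      _ = (-1 : PowerSeries ℤ)^t.card * PowerSeries.X ^ (∑ i ∈ t, i) := by
          rw [Finset.prod_const, Finset.prod_pow_eq_pow_sum]
      _ = PowerSeries.C (R := ℤ) ((-1)^t.card) * PowerSeries.X ^ (t.sum id) := by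
          rw [map_pow, map_neg, map_one]; rfl
  rw [h2, Finset.prod_const_one, mul_one, PowerSeries.coeff_C_mul, PowerSeries.coeff_X_pow]
  by_cases h : t.sum id = n
  · rw [if_pos h, if_pos h.symm, mul_one]
  · rw [if_neg h, if_neg (fun hh => h hh.symm), mul_zero]

lemma form11 {a k : ℕ} (ha : 1 ≤ a) (hk : 1 ≤ k) (h : a*(3*a-1) = k*(3*k-1)) : a = k := by
  zify [show 1 ≤ 3*a by omega, show 1 ≤ 3*k by omega] at h
  have := pent_unique (a := -(a:ℤ)) (b := -(k:ℤ)) (by linear_combination h)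
  omega

lemma form22 {a k : ℕ} (h : a*(3*a+1) = k*(3*k+1)) : a = k := by
  have hz : (a:ℤ)*(3*a+1) = (k:ℤ)*(3*k+1) := by exact_mod_cast h
  have := pent_unique (a := (a:ℤ)) (b := (k:ℤ)) (by linear_combination hz)
  omega

lemma form12 {a k : ℕ} (ha : 1 ≤ a) (hk : 1 ≤ k) (h : a*(3*a-1) = k*(3*k+1)) : False := by
  zify [show 1 ≤ 3*a by omega] at h
  have := pent_unique (a := -(a:ℤ)) (b := (k:ℤ)) (by linear_combination h)
  omega

lemma sum_Icc_form1 (k : ℕ) (hk : 1 ≤ k) :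
    (∑ i ∈ Finset.Icc k (2*k-1), i) * 2 = k*(3*k-1) := by
  have h := sum_Icc k (k-1)
  rw [show k + (k-1) = 2*k-1 by omega] at h
  rw [h]
  obtain ⟨m, rfl⟩ : ∃ m, k = m + 1 := ⟨k - 1, by omega⟩
  simp only [Nat.add_sub_cancel]
  rw [show 3*(m+1)-1 = 3*m+2 by omega]
  ring

lemma sum_Icc_form2 (k : ℕ) (hk : 1 ≤ k) :
    (∑ i ∈ Finset.Icc (k+1) (2*k), i) * 2 = k*(3*k+1) := by
  have h := sum_Icc (k+1) (k-1)
  rw [show (k+1) + (k-1) = 2*k by omega] at h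
  rw [h]
  obtain ⟨m, rfl⟩ : ∃ m, k = m + 1 := ⟨k - 1, by omega⟩
  simp only [Nat.add_sub_cancel]
  ring

lemma a1_pent (n k : ℕ) (hk : 1 ≤ k) (h : 2*n = k*(3*k-1) ∨ 2*n = k*(3*k+1)) :
    a1 n = (-1)^k := by
  have hkk : 1*2 ≤ k*(3*k-1) := Nat.mul_le_mul hk (by omega)
  have hkk2 : 1*2 ≤ k*(3*k+1) := Nat.mul_le_mul hk (by omega)
  have hn : 1 ≤ n := by rcases h with h | h <;> omega
  rw [a1_eq_sum, ← Finset.sum_filter_add_sum_filter_not _ (fun S => Exc S)]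
  have hz : ∑ S ∈ ((Finset.Icc 1 n).powerset.filter (fun S => S.sum id = n)).filter
      (fun S => ¬ Exc S), ((-1:ℤ)^S.card) = 0 := by
    rw [Finset.filter_filter]
    exact sum_nexc_zero n hn
  rw [hz, add_zero]
  have hid : ∀ T : Finset ℕ, T.sum id = ∑ x ∈ T, x := fun T => rfl
  -- the exceptional partition
  obtain ⟨E, hEexc, hEsum, hEcard⟩ :
      ∃ E : Finset ℕ, Exc E ∧ E.sum id = n ∧ E.card = k := by
    rcases h with h | h
    · refine ⟨Finset.Icc k (2*k-1), ⟨k, hk, Or.inl rfl⟩, ?_, by rw [Nat.card_Icc]; omega⟩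
      have := sum_Icc_form1 k hk
      rw [hid]
      omega
    · refine ⟨Finset.Icc (k+1) (2*k),
        ⟨k+1, by omega, Or.inr ⟨by omega, by rw [show 2*(k+1)-2 = 2*k by omega]⟩⟩, ?_,
        by rw [Nat.card_Icc]; omega⟩
      have := sum_Icc_form2 k hk
      rw [hid]
      omega
  have hfilter : ((Finset.Icc 1 n).powerset.filter (fun S => S.sum id = n)).filter
      (fun S => Exc S) = {E} := by
    ext S
    simp only [Finset.mem_filter, Finset.mem_powerset, Finset.mem_singleton]
    constructor
    · rintro ⟨⟨hsub, hsum⟩, hexcS⟩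
      obtain ⟨a, ha1, hf⟩ := exc_sum S hexcS
      obtain ⟨a', ha1', hf'⟩ := exc_sum E hEexc
      rcases h with h | h
      · -- 2n = k(3k-1)
        rcases hf with ⟨hSeq, hs, -⟩ | ⟨ha2, hSeq, hs, -⟩
        · have hak : a = k := form11 ha1 hk (by omega)
          subst hak
          rcases hf' with ⟨hEeq, hs', -⟩ | ⟨ha2', hEeq, hs', -⟩
          · have : a' = a := form11 ha1' ha1 (by omega)
            subst this
            rw [hSeq, hEeq]
          · exfalso
            exact form12 ha1 (show 1 ≤ a' - 1 by omega)
              (by rw [show 3*(a'-1)+1 = 3*a'-2 by omega]; omega)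
        · exfalso
          exact form12 hk (show 1 ≤ a - 1 by omega)
            (by rw [show 3*(a-1)+1 = 3*a-2 by omega]; omega)
      · -- 2n = k(3k+1)
        rcases hf with ⟨hSeq, hs, -⟩ | ⟨ha2, hSeq, hs, -⟩
        · exfalso
          exact form12 ha1 hk (by omega)
        · have hak : a - 1 = k := form22 (a := a-1) (k := k)
            (by rw [show 3*(a-1)+1 = 3*a-2 by omega]; omega)
          rcases hf' with ⟨hEeq, hs', -⟩ | ⟨ha2', hEeq, hs', -⟩
          · exfalso
            exact form12 ha1' hk (by omega)
          · have : a' - 1 = k := form22 (a := a'-1) (k := k)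
              (by rw [show 3*(a'-1)+1 = 3*a'-2 by omega]; omega)
            have haa : a = a' := by omega
            rw [hSeq, hEeq, haa]
    · rintro rfl
      refine ⟨⟨?_, hEsum⟩, hEexc⟩
      intro x hx
      rw [Finset.mem_Icc]
      have hx0 : 1 ≤ x := by
        obtain ⟨a, ha1, hf⟩ := exc_sum S hEexc
        rcases hf with ⟨hSeq, -, -⟩ | ⟨-, hSeq, -, -⟩ <;>
          · rw [hSeq, Finset.mem_Icc] at hx; omega
      have hle : id x ≤ S.sum id :=
        Finset.single_le_sum (f := (id : ℕ → ℕ)) (fun i _ => Nat.zero_le _) hx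
      simp only [id_eq] at hle
      have h2 : ∑ x ∈ S, x = n := by simpa using hEsum
      omega
  rw [hfilter, Finset.sum_singleton, hEcard]

lemma a1_zero (n : ℕ) (hn : 1 ≤ n) (h : ∀ m : ℤ, 3*m^2+m ≠ 2*(n:ℤ)) : a1 n = 0 := by
  rw [a1_eq_sum, ← Finset.sum_filter_add_sum_filter_not _ (fun S => Exc S)]
  have hz : ∑ S ∈ ((Finset.Icc 1 n).powerset.filter (fun S => S.sum id = n)).filter
      (fun S => ¬ Exc S), ((-1:ℤ)^S.card) = 0 := by
    rw [Finset.filter_filter]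
    exact sum_nexc_zero n hn
  rw [hz, add_zero]
  have hempty : ((Finset.Icc 1 n).powerset.filter (fun S => S.sum id = n)).filter
      (fun S => Exc S) = ∅ := by
    rw [Finset.filter_eq_empty_iff]
    rintro S hS hexcS
    rw [Finset.mem_filter] at hS
    obtain ⟨a, ha1, hf⟩ := exc_sum S hexcS
    rcases hf with ⟨-, hs, -⟩ | ⟨ha2, -, hs, -⟩
    · apply h (-(a:ℤ))
      have h2n : a*(3*a-1) = 2*n := by omega
      have h2z : ((a:ℤ))*(3*(a:ℤ)-1) = 2*(n:ℤ) := by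
        have := congrArg (fun x : ℕ => (x : ℤ)) h2n
        push_cast [Nat.cast_sub (show 1 ≤ 3*a by omega)] at this
        linarith [this]
      linear_combination h2z
    · apply h ((a:ℤ)-1)
      have h2n : (a-1)*(3*a-2) = 2*n := by omega
      have h2z : (((a:ℤ))-1)*(3*(a:ℤ)-2) = 2*(n:ℤ) := by
        have := congrArg (fun x : ℕ => (x : ℤ)) h2n
        push_cast [Nat.cast_sub (show 2 ≤ 3*a by omega), Nat.cast_sub (show 1 ≤ a by omega)]
          at this
        linarith [this]
      linear_combination h2z
  rw [hempty, Finset.sum_empty]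

lemma div_bridge (m : ℤ) (n : ℕ) : (3 * m ^ 2 + m) / 2 = (n : ℤ) ↔ 3*m^2+m = 2*(n:ℤ) := by
  have h2 : 2 ∣ 3*m^2+m := by
    rcases Int.even_or_odd m with ⟨k, hk⟩ | ⟨k, hk⟩
    · exact ⟨6*k^2+k, by rw [hk]; ring⟩
    · exact ⟨6*k^2+7*k+2, by rw [hk]; ring⟩
  obtain ⟨c, hc⟩ := h2
  rw [hc, Int.mul_ediv_cancel_left _ (by norm_num)]
  omega

lemma a1_zero_n : a1 0 = 1 := by
  rw [a1, Finset.Icc_eq_empty (by omega), Finset.prod_empty]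
  simp

lemma a1_of_pent (n : ℕ) (m : ℤ) (hm : 3*m^2+m = 2*(n:ℤ)) : a1 n = (-1)^m.natAbs := by
  rcases lt_trichotomy m 0 with hneg | rfl | hpos
  · set k := m.natAbs with hk
    have hk1 : 1 ≤ k := by omega
    have hkm : (k:ℤ) = -m := by omega
    have h2n : 2*n = k*(3*k-1) := by
      zify [show 1 ≤ 3*k by omega]
      rw [hkm]
      linear_combination -hm
    exact a1_pent n k hk1 (Or.inl h2n)
  · have hn : n = 0 := by omega
    subst hn
    simpa using a1_zero_n
  · set k := m.natAbs with hk
    have hk1 : 1 ≤ k := by omega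
    have hkm : (k:ℤ) = m := by omega
    have h2n : 2*n = k*(3*k+1) := by
      zify
      rw [hkm]
      linear_combination -hm
    exact a1_pent n k hk1 (Or.inr h2n)

end Pent

/-- `a₁(n) ≠ 0` iff `n` is a generalized pentagonal number `(3m²+m)/2`, in which case
`a₁(n) = (-1)^m`. -/
theorem a1_ne_zero_iff (n : ℕ) :
    (a1 n ≠ 0 ↔ ∃ m : ℤ, (3 * m ^ 2 + m) / 2 = (n : ℤ)) ∧
      ∀ m : ℤ, (3 * m ^ 2 + m) / 2 = (n : ℤ) → a1 n = (-1 : ℤ) ^ m.natAbs := by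
  have main : ∀ m : ℤ, (3 * m ^ 2 + m) / 2 = (n : ℤ) → a1 n = (-1 : ℤ) ^ m.natAbs :=
    fun m hm => Pent.a1_of_pent n m ((Pent.div_bridge m n).1 hm)
  refine ⟨⟨?_, ?_⟩, main⟩
  · intro h
    by_contra hno
    push_neg at hno
    have h' : ∀ m : ℤ, 3*m^2+m ≠ 2*(n:ℤ) := fun m hm => hno m ((Pent.div_bridge m n).2 hm)
    rcases Nat.eq_zero_or_pos n with rfl | hn
    · exact h' 0 (by norm_num)
    · exact h (Pent.a1_zero n hn h')
  · rintro ⟨m, hm⟩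
    rw [main m hm]
    exact pow_ne_zero _ (by norm_num)
end

section
/- Let a₃(n) be the coefficients defined by ∏_{n≥1}(1 - X^n)³ = ∑_{n≥0} a₃(n) X^n. Then a₃(n) = 0 if and only if n is not a triangular number, i.e. n ≠ m(m+1)/2 for all integers m ≥ 0. -/
/-- The `n`-th Fourier coefficient of `∏ (1 - X^k)³`. -/
noncomputable def a3 (n : ℕ) : ℤ :=
  (PowerSeries.coeff (R := ℤ) n) (∏ k ∈ Finset.Icc 1 n, (1 - PowerSeries.X ^ k) ^ 3)

open Polynomial Finset

noncomputable section
namespace A3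

abbrev R := Polynomial ℤ

/-- Gaussian binomial coefficient as a polynomial in `ℤ[X]`, with `ℤ` lower index. -/
def g : ℕ → ℤ → R
  | 0, r => if r = 0 then 1 else 0
  | (M+1), r => g M r + X ^ ((M+1-r).toNat) * g M (r-1)

lemma g_succ (M : ℕ) (r : ℤ) : g (M+1) r = g M r + X ^ ((M+1-r).toNat) * g M (r-1) := rfl

lemma g_neg (M : ℕ) : ∀ r : ℤ, r < 0 → g M r = 0 := by
  induction M with
  | zero => intro r hr; simp [g, hr.ne]
  | succ M ih => intro r hr; simp [g_succ, ih r hr, ih (r-1) (by omega)]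

lemma g_zero (M : ℕ) : g M 0 = 1 := by
  induction M with
  | zero => simp [g]
  | succ M ih => simp [g_succ, ih, g_neg M (-1) (by omega)]

lemma g_gt (M : ℕ) : ∀ r : ℤ, (M : ℤ) < r → g M r = 0 := by
  induction M with
  | zero => intro r hr; have : r ≠ 0 := by omega
            simp [g, this]
  | succ M ih =>
    intro r hr
    simp [g_succ, ih r (by omega), ih (r-1) (by omega)]

lemma g_diag (M : ℕ) : g M M = 1 := by
  induction M with
  | zero => simp [g]
  | succ M ih =>
    show g (M+1) ((M:ℤ)+1) = 1
    rw [g_succ, g_gt M ((M:ℤ)+1) (by omega)]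
    simpa using ih

lemma g_pascal2 (M : ℕ) : ∀ r : ℤ, g (M+1) r = X ^ r.toNat * g M r + g M (r-1) := by
  induction M with
  | zero =>
    intro r
    rcases eq_or_ne r 0 with h | h
    · subst h; simp [g]
    rcases eq_or_ne r 1 with h1 | h1
    · subst h1; simp [g]
    · show g 0 r + _ * g 0 (r-1) = _
      simp [g, h, h1, sub_eq_zero]
  | succ M ih =>
    intro r
    calc g (M+2) r = g (M+1) r + X ^ ((M+2-r).toNat) * g (M+1) (r-1) := by
            rw [g_succ]; push_cast; ring_nf
      _ = (X ^ r.toNat * g M r + g M (r-1))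
            + X ^ ((M+2-r).toNat) * (X ^ (r-1).toNat * g M (r-1) + g M (r-1-1)) := by
            rw [ih r, ih (r-1)]
      _ = X ^ r.toNat * (g M r + X ^ ((M+1-r).toNat) * g M (r-1))
            + (g M (r-1) + X ^ ((M+1-(r-1)).toNat) * g M (r-1-1)) := by
            have he : (M+1-(r-1)).toNat = (M+2-r).toNat := by omega
            rw [he]
            rcases le_or_gt r 0 with h | h
            · rw [g_neg M (r-1) (by omega)]; ring
            rcases le_or_gt r (M+1) with h2 | h2
            · have hx : (X:R) ^ ((M+2-r).toNat) * X ^ ((r-1).toNat)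
                  = X ^ (r.toNat) * X ^ ((M+1-r).toNat) := by
                rw [← pow_add, ← pow_add]; congr 1; omega
              linear_combination hx * g M (r-1)
            · rw [g_gt M (r-1) (by omega)]; ring
      _ = X ^ r.toNat * g (M+1) r + g (M+1) (r-1) := by rw [g_succ, g_succ]


/-- `∏_{j=1}^m (1 - X^j)` -/
def D (m : ℕ) : R := ∏ j ∈ Finset.range m, (1 - X^(j+1))

lemma D_zero : D 0 = 1 := by simp [D]
lemma D_succ (m : ℕ) : D (m+1) = D m * (1 - X^(m+1)) := by
  rw [D, prod_range_succ]; rfl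

lemma D_ne_zero (m : ℕ) : D m ≠ 0 := by
  intro h
  have h0 : (D m).eval 0 = 1 := by
    simp [D, Polynomial.eval_prod]
  rw [h] at h0; simp at h0

lemma g_mul_D : ∀ M r : ℕ, r ≤ M → g M (r:ℤ) * (D r * D (M-r)) = D M := by
  intro M
  induction M with
  | zero => intro r hr; interval_cases r; simp [g_zero, D_zero]
  | succ M ih =>
    intro r hr
    rcases Nat.eq_or_lt_of_le hr with h | h
    · subst h
      rw [g_diag (M+1)]  -- need cast: ((M+1:ℕ):ℤ)
      simp [D_zero]
    rcases Nat.eq_zero_or_pos r with h0 | h0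
    · subst h0
      show g (M+1) ((0:ℕ):ℤ) * _ = _
      rw [Nat.cast_zero, g_zero]; simp [D_zero]
    have hrM : r ≤ M := by omega
    have hr1 : r - 1 ≤ M := by omega
    rw [g_succ]
    have e1 : ((M:ℤ)+1-r).toNat = M+1-r := by omega
    have e2 : ((r:ℤ)-1) = ((r-1 : ℕ) : ℤ) := by omega
    have e3 : (M+1-r) = (M - r) + 1 := by omega
    have e4 : (M - (r-1)) = (M - r) + 1 := by omega
    rw [e1, e2, e3]
    clear e1 e3
    rw [add_mul, mul_assoc (X ^ (M-r+1))]
    calc g M (r:ℤ) * (D r * D (M-r+1)) + X ^ (M-r+1) * (g M ((r-1:ℕ):ℤ) * (D r * D (M-r+1)))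
        = (g M (r:ℤ) * (D r * D (M-r))) * (1 - X^(M-r+1))
          + X ^ (M-r+1) * ((g M ((r-1:ℕ):ℤ) * (D (r-1) * D (M-(r-1)))) * (1 - X^r)) := by
          rw [D_succ (M-r)]
          rw [e4, D_succ (M-r)]
          have : D r = D (r-1) * (1 - X^r) := by
            have := D_succ (r-1); rw [show r - 1 + 1 = r by omega] at this; exact this
          rw [this]; ring
      _ = D M * (1 - X^(M-r+1)) + X ^ (M-r+1) * (D M * (1 - X^r)) := by
          rw [ih r hrM, ih (r-1) hr1]
      _ = D M * (1 - X^(M+1)) := by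
          have hx : (X:R) ^ (M-r+1) * X ^ r = X ^ (M+1) := by
            rw [← pow_add]; congr 1; omega
          linear_combination (- D M) * hx
      _ = D (M+1) := (D_succ M).symm

/-- tail product `∏_{j=a+1}^{b} (1 - X^j)` -/
def T (a b : ℕ) : R := ∏ j ∈ Finset.Icc (a+1) b, (1 - X^j)

lemma T_of_le (a b : ℕ) (h : b ≤ a) : T a b = 1 := by
  rw [T, Finset.Icc_eq_empty (by omega), prod_empty]

lemma T_succ (a b : ℕ) (h : a ≤ b) : T a (b+1) = T a b * (1 - X^(b+1)) :=
  Finset.prod_Icc_succ_top (by omega) _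

lemma D_mul_T (a : ℕ) : ∀ b : ℕ, a ≤ b → D a * T a b = D b := by
  intro b
  induction b with
  | zero => intro h; interval_cases a; simp [T_of_le, D_zero]
  | succ b ih =>
    intro h
    rcases Nat.eq_or_lt_of_le h with h1 | h1
    · rw [← h1, T_of_le _ _ le_rfl, mul_one]
    · rw [T_succ a b (by omega), D_succ, ← mul_assoc, ih (by omega)]

lemma T_eq_one_add (a : ℕ) : ∀ b : ℕ, ∃ w : R, T a b = 1 + X^(a+1) * w := by
  intro b
  induction b with
  | zero => exact ⟨0, by simp [T_of_le]⟩
  | succ b ih =>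
    rcases le_or_gt (b+1) a with h | h
    · exact ⟨0, by simp [T_of_le _ _ h]⟩
    · obtain ⟨w, hw⟩ := ih
      refine ⟨w * (1 - X^(b+1)) - X^(b-a) * 1, ?_⟩
      rw [T_succ a b (by omega), hw]
      have hx : (X:R)^(a+1) * X^(b-a) = X^(b+1) := by rw [← pow_add]; congr 1; omega
      linear_combination hx


/-- triangular number of an integer -/
def t (k : ℤ) : ℕ := (k*(k+1)/2).toNat

lemma two_t (k : ℤ) : ((t k : ℤ)) * 2 = k * (k+1) := by
  have he : 2 ∣ k * (k+1) := (Int.even_mul_succ_self k).two_dvd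
  have hnn : 0 ≤ k * (k+1) := by nlinarith [sq_nonneg (2*k+1)]
  rw [t, Int.toNat_of_nonneg (Int.ediv_nonneg hnn (by norm_num)), Int.ediv_mul_cancel he]

lemma t_succ (k : ℤ) : (t (k+1) : ℤ) = t k + (k+1) := by
  have h1 := two_t k; have h2 := two_t (k+1)
  have : (k+1)*(k+1+1) = k*(k+1) + 2*(k+1) := by ring
  omega

lemma t_pred (k : ℤ) : (t (k-1) : ℤ) = t k - k := by
  have := t_succ (k-1)
  rw [show k-1+1 = k by ring] at this
  omega

def ε (k : ℤ) : ℤ := if Even k then 1 else -1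

lemma ε_succ (k : ℤ) : ε (k+1) = - ε k := by
  simp only [ε, Int.even_add_one]
  by_cases h : Even k <;> simp [h]

lemma ε_pred (k : ℤ) : ε (k-1) = - ε k := by
  have := ε_succ (k-1); simp at this; omega

def c (N : ℕ) (i : ℤ) : R := C (ε (i - N)) * X ^ (t (i - N)) * g (2*N) i

lemma c_neg (N : ℕ) (i : ℤ) (h : i < 0) : c N i = 0 := by
  rw [c, g_neg _ _ h]; ring

lemma c_rec (N : ℕ) (i : ℤ) :
    c (N+1) i = c N (i-1) + X^(2*N+1) * c N (i-1) - X^N * c N i - X^(N+1) * c N (i-2) := by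
  have hg : g (2*(N+1)) i = (X:R)^(i.toNat) * g (2*N) i + g (2*N) (i-1)
      + X^((2*N+2-i).toNat) * ( X^((i-1).toNat) * g (2*N) (i-1) + g (2*N) (i-1-1)) := by
    have h1 : 2*(N+1) = (2*N+1) + 1 := by ring
    rw [h1, g_succ, g_pascal2, g_pascal2]
    have h2 : ((2*N+1 : ℕ) + 1 - i).toNat = (2*N+2-i).toNat := by omega
    rw [h2]
  set k : ℤ := i - (N+1) with hk
  have hiN : i - (N:ℤ) = k + 1 := by push_cast [hk]; ring
  have hiN1 : i - 1 - (N:ℤ) = k := by push_cast [hk]; ring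
  have hiN2 : i - 1 - 1 - (N:ℤ) = k - 1 := by push_cast [hk]; ring
  have hcN1 : i - ((N:ℤ)+1) = k := by push_cast [hk]; ring
  -- three matching lemmas
  have M1 : (X:R)^(t k) * X^(i.toNat) * g (2*N) i = X^N * X^(t (k+1)) * g (2*N) i := by
    rcases lt_or_ge i 0 with h | h
    · rw [g_neg _ _ h]; ring
    · have : t k + i.toNat = N + t (k+1) := by
        have := t_succ k
        omega
      rw [← pow_add, ← pow_add, this]
  have M2 : (X:R)^(t k) * (X^((2*N+2-i).toNat) * X^((i-1).toNat)) * g (2*N) (i-1)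
      = X^(2*N+1) * X^(t k) * g (2*N) (i-1) := by
    rcases lt_or_ge (i-1) 0 with h | h
    · rw [g_neg _ _ h]; ring
    rcases lt_or_ge (2*N:ℤ) (i-1) with h2 | h2
    · rw [g_gt _ _ h2]; ring
    · have : t k + ((2*N+2-i).toNat + (i-1).toNat) = 2*N+1 + t k := by omega
      rw [← pow_add, ← pow_add, ← pow_add, this]
  have M3 : (X:R)^(t k) * X^((2*N+2-i).toNat) * g (2*N) (i-1-1) 
      = X^(N+1) * X^(t (k-1)) * g (2*N) (i-1-1) := by
    rcases lt_or_ge (i-1-1) 0 with h | h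
    · rw [g_neg _ _ h]; ring
    rcases lt_or_ge (2*N:ℤ) (i-1-1) with h2 | h2
    · rw [g_gt _ _ h2]; ring
    · have : t k + (2*N+2-i).toNat = N+1 + t (k-1) := by
        have := t_pred k
        omega
      rw [← pow_add, ← pow_add, this]
  have h12 : (i - 2 : ℤ) = i - 1 - 1 := by ring
  have hcast : ((N+1:ℕ):ℤ) = (N:ℤ)+1 := by push_cast; ring
  simp only [c, h12, hcast, hcN1, hiN, hiN1, hiN2, ε_succ, ε_pred, map_neg, hg]
  linear_combination (C (ε k) : R) * M1 + C (ε k) * M2 + C (ε k) * M3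

lemma c_gt (N : ℕ) (i : ℤ) (h : (2*N : ℤ) < i) : c N i = 0 := by
  rw [c, g_gt _ _ (by push_cast; omega)]; ring

/-- the finite Jacobi triple product polynomial -/
def Pp (N : ℕ) : Polynomial R :=
  ∏ j ∈ range N, ((1 - C ((X:R)^(j+1)) * X) * (X - C ((X:R)^j)))

lemma coeffP : ∀ N : ℕ, ∀ m : ℕ, (Pp N).coeff m = c N m := by
  intro N
  induction N with
  | zero =>
    intro m
    rcases Nat.eq_zero_or_pos m with h | h
    · subst h
      simp [Pp, c, ε, t, g_zero]
    · rw [c, g_gt 0 m (by exact_mod_cast h), mul_zero]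
      simp only [Pp, range_zero, prod_empty, Polynomial.coeff_one]
      rw [if_neg (by omega)]
  | succ N ih =>
    intro m
    have hC : (C ((X:R)^(N+1)) : Polynomial R) * C ((X:R)^N) = C ((X:R)^(2*N+1)) := by
      rw [← map_mul, ← pow_add]
      congr 2
      omega
    have hstep : Pp (N+1) = Pp N * X^1 + Pp N * X^1 * C ((X:R)^(2*N+1))
        - Pp N * C ((X:R)^N) - Pp N * X^2 * C ((X:R)^(N+1)) := by
      have h1 : Pp (N+1) = Pp N * ((1 - C ((X:R)^(N+1)) * X) * (X - C ((X:R)^N))) :=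
        prod_range_succ _ _
      rw [h1]
      linear_combination (Pp N * X : Polynomial R) * hC
    rw [hstep]
    simp only [coeff_add, coeff_sub, coeff_mul_C, coeff_mul_X_pow', ih]
    rw [c_rec]
    rcases Nat.lt_or_ge m 1 with h0 | h1
    · interval_cases m
      norm_num
      rw [c_neg N (-1) (by omega), c_neg N (-2) (by omega)]
      ring
    rcases Nat.lt_or_ge m 2 with h2 | h2
    · interval_cases m
      rw [if_pos (by norm_num : (1:ℕ) ≤ 1), if_neg (by norm_num : ¬ (2:ℕ) ≤ 1)]
      norm_num
      rw [c_neg N (-1) (by omega)]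
      ring
    · rw [if_pos h1, if_pos h2]
      have e1 : ((m - 1 : ℕ) : ℤ) = (m:ℤ) - 1 := by omega
      have e2 : ((m - 2 : ℕ) : ℤ) = (m:ℤ) - 2 := by omega
      rw [e1, e2]
      ring

lemma Pp_eq_sum (N : ℕ) : Pp N = ∑ i ∈ range (2*N+1), Polynomial.C (c N i) * X^i := by
  ext m
  rw [coeffP, finset_sum_coeff]
  simp only [coeff_C_mul, coeff_X_pow, mul_ite, mul_one, mul_zero]
  rcases Nat.lt_or_ge m (2*N+1) with h | h
  · rw [Finset.sum_eq_single m]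
    · simp
    · intro b _ hb; simp [Ne.symm hb]
    · intro hm; exact absurd (mem_range.mpr h) hm
  · rw [Finset.sum_eq_zero, c_gt N m (by push_cast; omega)]
    intro b hb
    simp only [mem_range] at hb
    rw [if_neg (by omega)]

lemma keyB (N : ℕ) (hN : 1 ≤ N) :
    D N * D (N-1) = ∑ i ∈ range (2*N+1), c N i * i := by
  have hfac : Pp N = ((∏ j ∈ range N, (1 - C ((X:R)^(j+1)) * X)) *
      ∏ j ∈ range (N-1), (X - C ((X:R)^(j+1)))) * (X - 1) := by
    rw [Pp, prod_mul_distrib, mul_assoc]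
    congr 1
    have := Finset.prod_range_succ' (fun j => (X : Polynomial R) - C ((X:R)^j)) (N-1)
    rw [show N-1+1 = N by omega] at this
    rw [this]
    simp
  have h1 : Polynomial.eval 1 (Polynomial.derivative (Pp N)) = D N * D (N-1) := by
    have hX1 : Polynomial.eval 1 ((X : Polynomial R) - 1) = 0 := by simp
    rw [hfac, Polynomial.derivative_mul, Polynomial.eval_add, Polynomial.eval_mul, hX1,
      mul_zero, zero_add, Polynomial.eval_mul]
    simp only [Polynomial.derivative_sub, Polynomial.derivative_X, Polynomial.derivative_one,
      sub_zero, Polynomial.eval_one, mul_one]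
    rw [Polynomial.eval_mul, Polynomial.eval_prod, Polynomial.eval_prod]
    simp only [Polynomial.eval_sub, Polynomial.eval_one, Polynomial.eval_mul,
      Polynomial.eval_C, Polynomial.eval_X, mul_one]
    rw [D, D]
  have h2 : Polynomial.eval 1 (Polynomial.derivative (Pp N))
      = ∑ i ∈ range (2*N+1), c N i * i := by
    rw [Pp_eq_sum, map_sum]
    rw [Polynomial.eval_finset_sum]
    apply Finset.sum_congr rfl
    intro i _
    rw [Polynomial.derivative_C_mul_X_pow]
    simp
  rw [← h1, h2]


lemma ε_negsucc (m : ℕ) : ε (-(m:ℤ)-1) = - ε m := by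
  simp only [ε]
  have : Even (-(m:ℤ)-1) ↔ ¬ Even (m:ℤ) := by
    constructor
    · intro ⟨r, hr⟩ ⟨s, hs⟩; omega
    · intro h
      rcases Int.even_or_odd (m:ℤ) with he | ⟨r, hr⟩
      · exact absurd he h
      · exact ⟨-r-1, by omega⟩
  by_cases h : Even (m:ℤ) <;> simp [h, this]

lemma ε_abs (k : ℤ) : ε k = 1 ∨ ε k = -1 := by
  rw [ε]; by_cases h : Even k <;> simp [h]

lemma DgT (N i : ℕ) (hi : i ≤ 2*N) :
    D N * g (2*N) i = T (min i (2*N-i)) N * T (max i (2*N-i)) (2*N) := by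
  set u := min i (2*N-i) with hu
  set v := max i (2*N-i) with hv
  have huN : u ≤ N := by omega
  have hvN : v ≤ 2*N := by omega
  apply mul_left_cancel₀ (b := D N * g (2*N) i) (mul_ne_zero (D_ne_zero u) (D_ne_zero v))
  have hDuv : D u * D v = D i * D (2*N-i) := by
    rcases le_or_gt i (2*N-i) with h | h
    · rw [hu, hv, min_eq_left h, max_eq_right h]
    · rw [hu, hv, min_eq_right h.le, max_eq_left h.le, mul_comm]
  calc D u * D v * (D N * g (2*N) i)
      = D N * (g (2*N) i * (D i * D (2*N-i))) := by rw [hDuv]; ring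
    _ = D N * D (2*N) := by rw [g_mul_D (2*N) i hi]
    _ = (D u * T u N) * (D v * T v (2*N)) := by rw [D_mul_T u N huN, D_mul_T v (2*N) hvN]
    _ = D u * D v * (T u N * T v (2*N)) := by ring

lemma t_ge (k : ℤ) : (k - 1 ≤ (t k : ℤ)) ∧ (-k - 1 ≤ (t k : ℤ)) := by
  have h := two_t k
  constructor
  · nlinarith [sq_nonneg (2*k-1)]
  · nlinarith [sq_nonneg (2*k+3), sq_nonneg (2*k+1)]

/-- coefficient of each term -/
lemma coeff_term (n i : ℕ) (hi : i ≤ 2*(n+1)) :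
    (D (n+1) * (c (n+1) i * (i:R))).coeff n
      = if t ((i:ℤ) - (n+1)) = n then ε ((i:ℤ)-(n+1)) * i else 0 := by
  set N := n + 1 with hN
  have hNc : ((N:ℕ):ℤ) = (n:ℤ) + 1 := by rw [hN]; push_cast; ring
  set k : ℤ := (i:ℤ) - ((n:ℤ)+1) with hk
  have hkN : (i:ℤ) - (N:ℤ) = k := by rw [hNc, hk]
  set u := min i (2*N-i) with hu
  set v := max i (2*N-i) with hv
  obtain ⟨w1, hw1⟩ := T_eq_one_add u N
  obtain ⟨w2, hw2⟩ := T_eq_one_add v (2*N)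
  have hDg := DgT N i hi
  have hvu : u ≤ v := by omega
  -- the key bound : t k + u + 1 > n
  have hbound : n < t k + (u + 1) := by
    have h1 := (t_ge k).1
    have h2 := (t_ge k).2
    have hu1 : u ≤ i := min_le_left _ _
    have hu2 : u ≤ 2*N - i := min_le_right _ _
    have hu3 : u = i ∨ u = 2*N - i := by
      rcases le_total i (2*N-i) with h | h
      · left; rw [hu, min_eq_left h]
      · right; rw [hu, min_eq_right h]
    omega
  have hexp : D N * (c N i * (i:R))
      = C (ε k * i) * X ^ (t k) + X ^ (t k + (u+1)) *
        (C (ε k * i) * (w1 + X^(v-u) * w2 + X^(v-u) * (X^(u+1) * (w1 * w2)))) := by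
    have : D N * (c N i * (i:R)) = C (ε k) * (i:R) * X^(t k) * (D N * g (2*N) i) := by
      rw [c, hkN]; ring
    rw [this, hDg, hw1, hw2]
    have hC : ((i:R)) = C ((i:ℤ)) := by simp [Polynomial.C_eq_intCast]
    have hxv : (X:R)^(v+1) = X^(u+1) * X^(v-u) := by
      rw [← pow_add]; congr 1; omega
    rw [hC, hxv, map_mul]
    ring
  rw [hexp, coeff_add]
  have hzero : (X ^ (t k + (u+1)) *
      (C (ε k * i) * (w1 + X^(v-u) * w2 + X^(v-u) * (X^(u+1) * (w1 * w2))))).coeff n = 0 := by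
    rw [mul_comm, coeff_mul_X_pow']
    rw [if_neg (by omega)]
  rw [hzero, add_zero, coeff_C_mul, coeff_X_pow]
  rcases eq_or_ne (t k) n with h | h
  · rw [if_pos h.symm, if_pos h, mul_one]
  · rw [if_neg (Ne.symm h), if_neg h, mul_zero]


lemma main_coeff (n : ℕ) :
    ((D n)^3).coeff n
    = ∑ i ∈ range (2*(n+1)+1),
        (if t ((i:ℤ) - ((n:ℤ)+1)) = n then ε ((i:ℤ)-((n:ℤ)+1)) * i else 0) := by
  have hB := keyB (n+1) (by omega)
  rw [show n+1-1 = n from rfl] at hB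
  have h2 : ((D n)^3).coeff n = (D (n+1) * (D (n+1) * D n)).coeff n := by
    rw [D_succ]
    have he : D n * (1 - X^(n+1)) * (D n * (1 - X^(n+1)) * D n)
        = (D n)^3 + ((D n)^3 * (X^(n+1) - 2)) * X^(n+1) := by ring
    rw [he, coeff_add, coeff_mul_X_pow', if_neg (by omega), add_zero]
  rw [h2, hB, Finset.mul_sum, finset_sum_coeff]
  apply Finset.sum_congr rfl
  intro i hi
  simp only [mem_range] at hi
  have := coeff_term n i (by omega)
  convert this using 3 <;> push_cast <;> ring

lemma sum_nontri (n : ℕ) (h : ¬ ∃ m : ℕ, m*(m+1) = 2*n) :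
    (∑ i ∈ range (2*(n+1)+1),
      (if t ((i:ℤ) - ((n:ℤ)+1)) = n then ε ((i:ℤ)-((n:ℤ)+1)) * i else 0)) = 0 := by
  apply Finset.sum_eq_zero
  intro i _
  rw [if_neg]
  intro ht
  set k : ℤ := (i:ℤ) - ((n:ℤ)+1) with hk
  have h2 := two_t k
  rw [ht] at h2
  rcases le_or_gt 0 k with hp | hp
  · refine h ⟨k.toNat, ?_⟩
    have hkt : (k.toNat : ℤ) = k := Int.toNat_of_nonneg hp
    have : ((k.toNat * (k.toNat+1) : ℕ) : ℤ) = ((2*n : ℕ) : ℤ) := by push_cast [hkt]; omega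
    exact_mod_cast this
  · refine h ⟨(-k-1).toNat, ?_⟩
    have hkt : (((-k-1).toNat) : ℤ) = -k-1 := Int.toNat_of_nonneg (by omega)
    have hmul : (-k-1) * ((-k-1)+1) = k * (k+1) := by ring
    have : (((-k-1).toNat * ((-k-1).toNat+1) : ℕ) : ℤ) = ((2*n : ℕ) : ℤ) := by
      push_cast [hkt]; omega
    exact_mod_cast this

lemma sum_tri (n m : ℕ) (hm : m*(m+1) = 2*n) :
    (∑ i ∈ range (2*(n+1)+1),
      (if t ((i:ℤ) - ((n:ℤ)+1)) = n then ε ((i:ℤ)-((n:ℤ)+1)) * i else 0))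
    = ε m * (2*m+1) := by
  have hmn : m ≤ n := by nlinarith
  have hcond : ∀ i : ℕ, t ((i:ℤ) - ((n:ℤ)+1)) = n ↔ (i = n - m ∨ i = n + 1 + m) := by
    intro i
    set k : ℤ := (i:ℤ) - ((n:ℤ)+1) with hk
    constructor
    · intro ht
      have h2 := two_t k
      rw [ht] at h2
      have hfac : (k - m) * (k + m + 1) = 0 := by
        have hmz : ((m:ℤ))*((m:ℤ)+1) = 2*(n:ℤ) := by exact_mod_cast hm
        nlinarith
      rcases mul_eq_zero.mp hfac with h0 | h0 <;> omega
    · intro hi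
      have h2t : (t k : ℤ) * 2 = k * (k+1) := two_t k
      have hmz : ((m:ℤ))*((m:ℤ)+1) = 2*(n:ℤ) := by exact_mod_cast hm
      rcases hi with hi | hi <;> subst hi
      · have hkv : k = -(m:ℤ)-1 := by rw [hk]; push_cast [hmn]; try omega
        have : k * (k+1) = (m:ℤ)*((m:ℤ)+1) := by rw [hkv]; try ring
        omega
      · have hkv : k = (m:ℤ) := by rw [hk]; push_cast; try omega
        have : k * (k+1) = (m:ℤ)*((m:ℤ)+1) := by rw [hkv]; try ring
        omega
  have hsub : ({n - m, n + 1 + m} : Finset ℕ) ⊆ range (2*(n+1)+1) := by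
    intro x hx
    simp only [Finset.mem_insert, Finset.mem_singleton] at hx
    rw [mem_range]
    omega
  rw [← Finset.sum_subset hsub]
  · rw [Finset.sum_pair (by omega : n - m ≠ n + 1 + m)]
    have hkv1 : ((n-m : ℕ):ℤ) - ((n:ℤ)+1) = -(m:ℤ)-1 := by push_cast [hmn]; try omega
    have hkv2 : ((n+1+m : ℕ):ℤ) - ((n:ℤ)+1) = (m:ℤ) := by push_cast; try omega
    rw [if_pos ((hcond (n-m)).mpr (Or.inl rfl)), if_pos ((hcond (n+1+m)).mpr (Or.inr rfl)),
      hkv1, hkv2, ε_negsucc m]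
    push_cast [hmn]
    ring
  · intro x _ hx
    simp only [Finset.mem_insert, Finset.mem_singleton, not_or] at hx
    rw [if_neg]
    intro ht
    rcases (hcond x).mp ht with h | h <;> omega


lemma D_eq_Icc (n : ℕ) : D n = ∏ k ∈ Finset.Icc 1 n, (1 - (X:R)^k) := by
  induction n with
  | zero => simp [D_zero]
  | succ n ih => rw [D_succ, ih, Finset.prod_Icc_succ_top (by omega)]


lemma a3_eq (n : ℕ) : a3 n = ((D n)^3).coeff n := by
  rw [a3]
  have h : (∏ k ∈ Finset.Icc 1 n, (1 - PowerSeries.X ^ k) ^ 3 : PowerSeries ℤ)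
      = (((D n)^3 : R) : PowerSeries ℤ) := by
    rw [D_eq_Icc, ← Finset.prod_pow, ← Polynomial.coeToPowerSeries.ringHom_apply, map_prod]
    apply Finset.prod_congr rfl
    intro k _
    rw [map_pow, map_sub, map_one, map_pow]
    rw [Polynomial.coeToPowerSeries.ringHom_apply, Polynomial.coe_X]
  rw [h, Polynomial.coeff_coe]

theorem a3_eq_zero_iff' (n : ℕ) :
    a3 n = 0 ↔ ¬∃ m : ℕ, m * (m + 1) / 2 = n := by
  have hiff : (∃ m : ℕ, m*(m+1)/2 = n) ↔ (∃ m : ℕ, m*(m+1) = 2*n) := by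
    constructor
    · rintro ⟨m, hm⟩
      obtain ⟨r, hr⟩ := Nat.even_mul_succ_self m
      exact ⟨m, by omega⟩
    · rintro ⟨m, hm⟩
      exact ⟨m, by omega⟩
  constructor
  · intro h0 hex
    obtain ⟨m, hm⟩ := hiff.mp hex
    rw [a3_eq, main_coeff, sum_tri n m hm] at h0
    rcases ε_abs m with h | h <;> rw [h] at h0 <;> omega
  · intro h
    rw [a3_eq, main_coeff, sum_nontri n]
    intro ⟨m, hm⟩
    exact h (hiff.mpr ⟨m, hm⟩)


end A3

end

/-- `a₃(n) = 0` iff `n` is not a triangular number. -/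
theorem a3_eq_zero_iff (n : ℕ) :
    a3 n = 0 ↔ ¬∃ m : ℕ, m * (m + 1) / 2 = n :=
  A3.a3_eq_zero_iff' n
end
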